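/- Let I be a PPN-3-SAT instance with clauses C₁,…,C_m (2-clauses C₁,…,C_{m₂} and 3-clauses C_{m₂+1},…,C_m), and construct the HRRCDR instance I' as follows (hospital capacities are 1 unless stated; notation: for variable x_i, its k-th positive occurrence (k=1,2) is the ℓ_{i,k}-th literal of clause C_{j_{i,k}} and its negative occurrence is the ℓ_{i,3}-th literal of C_{j_{i,3}}; for clause C_j whose ℓ-th literal is of variable x_{i_{j,ℓ}}, k_{j,ℓ} ∈ {1,2,3} indicates which of those three occurrences it is). Variable gadget for x_i: residents e'_{i,1}: (b'_{i,1}, x'_{i,3}) and e'_{i,2}: (b'_{i,2}, x'_{i,3}); hospitals b'_{i,1}: (e'_{i,1}), x'_{i,1}: (c'_{j_{i,1},ℓ_{i,1}}), b'_{i,2}: (e'_{i,2}), x'_{i,2}: (c'_{j_{i,2},ℓ_{i,2}}), and x'_{i,3} of capacity 2 with list (e'_{i,1}, e'_{i,2}, c'_{j_{i,3},ℓ_{i,3}}); regions {b'_{i,1}, x'_{i,1}} with cap 1 and {b'_{i,2}, x'_{i,2}} with cap 1. Clause gadget for a 2-clause C_j: residents c'_{j,1}: (x'_{i_{j,1},k_{j,1}},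 a'_{j,1}) and c'_{j,2}: (x'_{i_{j,2},k_{j,2}}, a'_{j,1}); hospitals a'_{j,1}: (c'_{j,1}, c'_{j,2}) and y'_j: (z'_j); region {a'_{j,1}, y'_j} with cap 1. Clause gadget for a 3-clause C_j: residents c'_{j,1}: (x'_{i_{j,1},k_{j,1}}, a'_{j,1}), c'_{j,2}: (x'_{i_{j,2},k_{j,2}}, a'_{j,1}), d'_j: (a'_{j,2}, a'_{j,3}), c'_{j,3}: (x'_{i_{j,3},k_{j,3}}, a'_{j,3}); hospitals a'_{j,1}: (c'_{j,1}, c'_{j,2}), a'_{j,2}: (d'_j), a'_{j,3}: (d'_j, c'_{j,3}), y'_j: (z'_j); regions {a'_{j,1}, a'_{j,2}} with cap 1 and {a'_{j,3}, y'_j} with cap 1. Terminal gadget for each clause C_j: residents g'_{j,1}: (g'_{j,2}, g'_{j,4}), g'_{j,3}: (g'_{j,4}, g'_{j,2}), z'_j: (y'_j, g'_{j,2}); hospitals g'_{j,2}: (z'_j, g'_{j,3}, g'_{j,1}) and g'_{j,4}: (g'_{j,1}, g'_{j,3}); region {g'_{j,2}, g'_{j,4}} with cap 1. Then I' admits a strongly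 stable matching if and only if I is satisfiable. (Note that in I' every resident's list has length ≤ 2, every hospital's list has length ≤ 3, every region has size ≤ 2, and regions are pairwise disjoint.) -/

import Mathlib

/-- `a` is strictly preferred to `b` in the strictly ordered preference list `l`
(most preferred first). -/
def ListPref {α : Type*} [DecidableEq α] (l : List α) (a b : α) : Prop :=
  b ∈ l ∧ l.idxOf a < l.idxOf b

/-- An instance of the Hospitals/Residents problem with Regional Caps (HRRC):
residents `R`, hospitals `H`, strict preference lists on both sides,
hospital capacities `q`, a family `regions` of regions with regional caps `cap`. -/
structure HRRC (R H : Type*) where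
  prefR : R → List H
  prefH : H → List R
  q : H → ℕ
  regions : Set (Finset H)
  cap : Finset H → ℕ

namespace HRRC

variable {R H : Type*} [DecidableEq R] [DecidableEq H]

/-- Well-formedness: preference lists are strict (no repetitions), acceptability is
mutual, and regions are nonempty. -/
def WellFormed (I : HRRC R H) : Prop :=
  (∀ r, (I.prefR r).Nodup) ∧ (∀ h, (I.prefH h).Nodup) ∧
  (∀ r h, h ∈ I.prefR r ↔ r ∈ I.prefH h) ∧
  (∀ E ∈ I.regions, E.Nonempty)

/-- `M(h)`: the set of residents assigned to hospital `h`. -/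
def assignedTo (M : Finset (R × H)) (h : H) : Finset R :=
  (M.filter fun p => p.2 = h).image Prod.fst

/-- `M(E)`: the set of residents assigned to some hospital in the region `E`. -/
def assignedIn (M : Finset (R × H)) (E : Finset H) : Finset R :=
  (M.filter fun p => p.2 ∈ E).image Prod.fst

/-- `M` is a matching: pairs are mutually acceptable, each resident has at most one
hospital, and no hospital exceeds its capacity. -/
def IsMatching (I : HRRC R H) (M : Finset (R × H)) : Prop :=
  (∀ p ∈ M, p.2 ∈ I.prefR p.1 ∧ p.1 ∈ I.prefH p.2) ∧
  (∀ r h h', (r, h) ∈ M → (r, h') ∈ M → h = h') ∧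
  (∀ h, (assignedTo M h).card ≤ I.q h)

/-- Feasibility: all regional caps are respected. -/
def FeasibleCaps (I : HRRC R H) (M : Finset (R × H)) : Prop :=
  ∀ E ∈ I.regions, (assignedIn M E).card ≤ I.cap E

/-- `M \ {(r, M(r))} ∪ {(r, h)}`. -/
def move (M : Finset (R × H)) (r : R) (h : H) : Finset (R × H) :=
  (M.filter fun p => p.1 ≠ r) ∪ {(r, h)}

/-- `(r, h)` is a blocking pair for `M`. -/
def IsBlockingPair (I : HRRC R H) (M : Finset (R × H)) (r : R) (h : H) : Prop :=
  (r, h) ∉ M ∧ (h ∈ I.prefR r ∧ r ∈ I.prefH h) ∧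
  ((∀ h', (r, h') ∉ M) ∨ ∃ h', (r, h') ∈ M ∧ ListPref (I.prefR r) h h') ∧
  ((assignedTo M h).card < I.q h ∨ ∃ r' ∈ assignedTo M h, ListPref (I.prefH h) r r')

/-- `(r, h)` is a strong blocking pair for `M`. -/
def IsSBP (I : HRRC R H) (M : Finset (R × H)) (r : R) (h : H) : Prop :=
  I.IsBlockingPair M r h ∧
  (I.FeasibleCaps (move M r h) ∨ ∃ r' ∈ assignedTo M h, ListPref (I.prefH h) r r')

/-- `M` is a strongly stable matching of `I`. -/
def IsStronglyStable (I : HRRC R H) (M : Finset (R × H)) : Prop :=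
  I.IsMatching M ∧ I.FeasibleCaps M ∧ ∀ r h, ¬ I.IsSBP M r h

end HRRC

/- A PPN-3-SAT instance with `n` variables and `m` clauses is encoded as follows:
clauses `j` with `(j : ℕ) < m₂` are 2-clauses, the others are 3-clauses (so clause
`j` has length `if (j : ℕ) < m₂ then 2 else 3`, and its valid literal positions are
the `l : Fin 3` below that length); `v j l` is the variable of the `l`-th literal of
clause `j` and `pol j l` its polarity; `occ i k = (j_{i,k}, ℓ_{i,k})` is the position
of the `k`-th occurrence of variable `i` (`k = 0, 1` its two positive occurrences,
`k = 2` its negative occurrence); `kIdx j l = k_{j,l}` tells which occurrence of its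
variable the `l`-th literal of clause `j` is. -/

/-- Residents of `I'`: `e'_{i,1}, e'_{i,2}` (here `e i 0, e i 1`);
`c'_{j,1}, c'_{j,2}, c'_{j,3}` (here `c j 0, c j 1, c j 2`; `c j 2` is unused for a
2-clause `j` and gets an empty list); `d'_j` (unused for 2-clauses);
`g'_{j,1}, g'_{j,3}, z'_j`. -/
inductive Res12 (n m : ℕ) where
  | e (i : Fin n) (t : Fin 2)
  | c (j : Fin m) (l : Fin 3)
  | d (j : Fin m)
  | g1 (j : Fin m)
  | g3 (j : Fin m)
  | z (j : Fin m)
deriving DecidableEq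

/-- Hospitals of `I'`: `b'_{i,1}, b'_{i,2}` (here `b i 0, b i 1`);
`x'_{i,1}, x'_{i,2}, x'_{i,3}` (here `x i 0, x i 1, x i 2`);
`a'_{j,1}, a'_{j,2}, a'_{j,3}` (here `a j 0, a j 1, a j 2`; the latter two are unused
for 2-clauses); `y'_j`; `g'_{j,2}, g'_{j,4}`. -/
inductive Hos12 (n m : ℕ) where
  | b (i : Fin n) (t : Fin 2)
  | x (i : Fin n) (k : Fin 3)
  | a (j : Fin m) (t : Fin 3)
  | y (j : Fin m)
  | g2 (j : Fin m)
  | g4 (j : Fin m)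
deriving DecidableEq

/-- Resident preference lists of `I'`:
`e'_{i,1}: (b'_{i,1}, x'_{i,3})`, `e'_{i,2}: (b'_{i,2}, x'_{i,3})`,
`c'_{j,1}: (x'_{i_{j,1},k_{j,1}}, a'_{j,1})`, `c'_{j,2}: (x'_{i_{j,2},k_{j,2}}, a'_{j,1})`,
`c'_{j,3}: (x'_{i_{j,3},k_{j,3}}, a'_{j,3})` (3-clauses only),
`d'_j: (a'_{j,2}, a'_{j,3})` (3-clauses only),
`g'_{j,1}: (g'_{j,2}, g'_{j,4})`, `g'_{j,3}: (g'_{j,4}, g'_{j,2})`,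
`z'_j: (y'_j, g'_{j,2})`. -/
def prefRes12 {n m : ℕ} (m₂ : ℕ) (v : Fin m → Fin 3 → Fin n)
    (kIdx : Fin m → Fin 3 → Fin 3) : Res12 n m → List (Hos12 n m)
  | .e i t => if (t : ℕ) = 0 then [.b i 0, .x i 2] else [.b i 1, .x i 2]
  | .c j l =>
      if (l : ℕ) < 2 then [.x (v j l) (kIdx j l), .a j 0]
      else if (j : ℕ) < m₂ then []
      else [.x (v j l) (kIdx j l), .a j 2]
  | .d j => if (j : ℕ) < m₂ then [] else [.a j 1, .a j 2]
  | .g1 j => [.g2 j, .g4 j]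
  | .g3 j => [.g4 j, .g2 j]
  | .z j => [.y j, .g2 j]

/-- Hospital preference lists of `I'`:
`b'_{i,1}: (e'_{i,1})`, `b'_{i,2}: (e'_{i,2})`,
`x'_{i,1}: (c'_{j_{i,1},ℓ_{i,1}})`, `x'_{i,2}: (c'_{j_{i,2},ℓ_{i,2}})`,
`x'_{i,3}: (e'_{i,1}, e'_{i,2}, c'_{j_{i,3},ℓ_{i,3}})`,
`a'_{j,1}: (c'_{j,1}, c'_{j,2})`, `a'_{j,2}: (d'_j)` and `a'_{j,3}: (d'_j, c'_{j,3})`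
(3-clauses only), `y'_j: (z'_j)`, `g'_{j,2}: (z'_j, g'_{j,3}, g'_{j,1})`,
`g'_{j,4}: (g'_{j,1}, g'_{j,3})`. -/
def prefHos12 {n m : ℕ} (m₂ : ℕ) (occ : Fin n → Fin 3 → Fin m × Fin 3) :
    Hos12 n m → List (Res12 n m)
  | .b i t => if (t : ℕ) = 0 then [.e i 0] else [.e i 1]
  | .x i k =>
      if (k : ℕ) < 2 then [.c (occ i k).1 (occ i k).2]
      else [.e i 0, .e i 1, .c (occ i k).1 (occ i k).2]
  | .a j t =>
      if (t : ℕ) = 0 then [.c j 0, .c j 1]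
      else if (j : ℕ) < m₂ then []
      else if (t : ℕ) = 1 then [.d j]
      else [.d j, .c j 2]
  | .y j => [.z j]
  | .g2 j => [.z j, .g3 j, .g1 j]
  | .g4 j => [.g1 j, .g3 j]

/-- Regions of `I'`: for each variable `i`, `{b'_{i,1}, x'_{i,1}}` and
`{b'_{i,2}, x'_{i,2}}`; for each 2-clause `j`, `{a'_{j,1}, y'_j}`; for each
3-clause `j`, `{a'_{j,1}, a'_{j,2}}` and `{a'_{j,3}, y'_j}`; for each clause `j`,
`{g'_{j,2}, g'_{j,4}}`.  All regional caps are 1. -/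
def regions12 {n m : ℕ} (m₂ : ℕ) : Set (Finset (Hos12 n m)) :=
  { E | (∃ i : Fin n,
      E = {Hos12.b i 0, Hos12.x i 0} ∨ E = {Hos12.b i 1, Hos12.x i 1}) ∨
    (∃ j : Fin m,
      ((j : ℕ) < m₂ ∧ E = {Hos12.a j 0, Hos12.y j}) ∨
      (¬ (j : ℕ) < m₂ ∧
        (E = {Hos12.a j 0, Hos12.a j 1} ∨ E = {Hos12.a j 2, Hos12.y j})) ∨
      E = {Hos12.g2 j, Hos12.g4 j}) }

/-- The HRRCDR instance `I'` built from a PPN-3-SAT instance: hospital `x'_{i,3}`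
has capacity 2, all other hospitals have capacity 1, and all regional caps are 1. -/
def ppnInstance232 {n m : ℕ} (m₂ : ℕ) (v : Fin m → Fin 3 → Fin n)
    (occ : Fin n → Fin 3 → Fin m × Fin 3) (kIdx : Fin m → Fin 3 → Fin 3) :
    HRRC (Res12 n m) (Hos12 n m) where
  prefR := prefRes12 m₂ v kIdx
  prefH := prefHos12 m₂ occ
  q := fun h => match h with
    | .x _ k => if (k : ℕ) = 2 then 2 else 1
    | _ => 1
  regions := regions12 m₂
  cap := fun _ => 1

/-! ### Auxiliary infrastructure for the reduction proof -/

deriving instance Fintype for Res12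

section Generic

variable {R H : Type*} [DecidableEq R] [DecidableEq H]

lemma mem_assignedTo {M : Finset (R × H)} {r : R} {h : H} :
    r ∈ HRRC.assignedTo M h ↔ (r, h) ∈ M := by
  simp only [HRRC.assignedTo, Finset.mem_image, Finset.mem_filter]
  constructor
  · rintro ⟨⟨r', h'⟩, ⟨hm, rfl⟩, rfl⟩; exact hm
  · intro hm; exact ⟨(r, h), ⟨hm, rfl⟩, rfl⟩

lemma mem_assignedIn {M : Finset (R × H)} {r : R} {E : Finset H} :
    r ∈ HRRC.assignedIn M E ↔ ∃ h ∈ E, (r, h) ∈ M := by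
  simp only [HRRC.assignedIn, Finset.mem_image, Finset.mem_filter]
  constructor
  · rintro ⟨⟨r', h'⟩, ⟨hm, hE⟩, rfl⟩; exact ⟨h', hE, hm⟩
  · rintro ⟨h', hE, hm⟩; exact ⟨(r, h'), ⟨hm, hE⟩, rfl⟩

lemma mem_move {M : Finset (R × H)} {r : R} {h : H} {p : R × H} :
    p ∈ HRRC.move M r h ↔ (p ∈ M ∧ p.1 ≠ r) ∨ p = (r, h) := by
  simp [HRRC.move, Finset.mem_union, Finset.mem_filter]
  exact or_comm

/-- If every region containing `h` is occupied only by `r`, the move is feasible. -/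
lemma moveFeas {I : HRRC R H} {M : Finset (R × H)} {r : R} {h : H}
    (hfeas : I.FeasibleCaps M) (hcap : ∀ E, 1 ≤ I.cap E)
    (hreg : ∀ E ∈ I.regions, h ∈ E → ∀ r' h', (r', h') ∈ M → h' ∈ E → r' = r) :
    I.FeasibleCaps (HRRC.move M r h) := by
  intro E hE
  by_cases hhE : h ∈ E
  · have : HRRC.assignedIn (HRRC.move M r h) E ⊆ {r} := by
      intro r' hr'
      rcases mem_assignedIn.1 hr' with ⟨h', hh', hm⟩
      rcases mem_move.1 hm with ⟨hm, _⟩ | heq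
      · exact Finset.mem_singleton.2 (hreg E hE hhE r' h' hm hh')
      · simp at heq; simp [heq.1]
    calc (HRRC.assignedIn (HRRC.move M r h) E).card ≤ ({r} : Finset R).card :=
          Finset.card_le_card this
      _ ≤ I.cap E := by simpa using hcap E
  · have : HRRC.assignedIn (HRRC.move M r h) E ⊆ HRRC.assignedIn M E := by
      intro r' hr'
      rcases mem_assignedIn.1 hr' with ⟨h', hh', hm⟩
      rcases mem_move.1 hm with ⟨hm, _⟩ | heq
      · exact mem_assignedIn.2 ⟨h', hh', hm⟩
      · exfalso; rcases Prod.mk.injEq .. ▸ heq with ⟨_, rfl⟩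
        exact hhE hh'
    exact le_trans (Finset.card_le_card this) (hfeas E hE)

/-- From infeasibility of a move, extract a second occupant of a region containing `h`. -/
lemma moveInfeas {I : HRRC R H} {M : Finset (R × H)} {r : R} {h : H}
    (hfeas : I.FeasibleCaps M) (hcap : ∀ E, I.cap E = 1)
    (hnot : ¬ I.FeasibleCaps (HRRC.move M r h)) :
    ∃ E ∈ I.regions, h ∈ E ∧ ∃ r' h', (r', h') ∈ M ∧ h' ∈ E ∧ r' ≠ r := by
  simp only [HRRC.FeasibleCaps, not_forall] at hnot
  obtain ⟨E, hE, hbad⟩ := hnot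
  push_neg at hbad
  have hsub : ∀ r'' ∈ HRRC.assignedIn (HRRC.move M r h) E,
      r'' = r ∨ ∃ h', (r'', h') ∈ M ∧ h' ∈ E ∧ r'' ≠ r := by
    intro r'' hr''
    rcases mem_assignedIn.1 hr'' with ⟨h', hh', hm⟩
    rcases mem_move.1 hm with ⟨hm, hne⟩ | heq
    · exact Or.inr ⟨h', hm, hh', hne⟩
    · rcases Prod.mk.injEq .. ▸ heq with ⟨rfl, _⟩; exact Or.inl rfl
  have hcard : 1 < (HRRC.assignedIn (HRRC.move M r h) E).card := by
    have := hcap E; omega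
  by_cases hhE : h ∈ E
  · obtain ⟨p, hp, q, hq, hpq⟩ := Finset.one_lt_card.1 hcard
    have key : ∃ r'', r'' ∈ HRRC.assignedIn (HRRC.move M r h) E ∧ r'' ≠ r := by
      by_cases hpr : p = r
      · exact ⟨q, hq, by rw [hpr] at hpq; exact fun hc => hpq hc.symm⟩
      · exact ⟨p, hp, hpr⟩
    obtain ⟨r'', hr'', hner⟩ := key
    rcases hsub r'' hr'' with rfl | ⟨h', hm, hh', hne⟩
    · exact absurd rfl hner
    · exact ⟨E, hE, hhE, r'', h', hm, hh', hne⟩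
  · exfalso
    have hsub2 : HRRC.assignedIn (HRRC.move M r h) E ⊆ HRRC.assignedIn M E := by
      intro r' hr'
      rcases mem_assignedIn.1 hr' with ⟨h', hh', hm⟩
      rcases mem_move.1 hm with ⟨hm, _⟩ | heq
      · exact mem_assignedIn.2 ⟨h', hh', hm⟩
      · exfalso; rcases Prod.mk.injEq .. ▸ heq with ⟨_, rfl⟩
        exact hhE hh'
    have := le_trans (Finset.card_le_card hsub2) (hfeas E hE)
    rw [hcap E] at this
    omega

lemma two_le_card_assignedIn {M : Finset (R × H)} {E : Finset H}
    {r1 r2 : R} {h1 h2 : H} (hne : r1 ≠ r2) (h1m : (r1, h1) ∈ M) (h2m : (r2, h2) ∈ M)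
    (hh1 : h1 ∈ E) (hh2 : h2 ∈ E) : 2 ≤ (HRRC.assignedIn M E).card := by
  have := Finset.one_lt_card.2 ⟨r1, mem_assignedIn.2 ⟨h1, hh1, h1m⟩,
    r2, mem_assignedIn.2 ⟨h2, hh2, h2m⟩, hne⟩
  omega

lemma LP_head {p q : H} (h : q ≠ p) : ListPref [p, q] p q :=
  ⟨by simp, by simp [List.idxOf_cons, beq_iff_eq, h.symm]⟩

lemma LP_mid {u p q : H} (hpu : p ≠ u) (hqu : q ≠ u) (hqp : q ≠ p) :
    ListPref [u, p, q] p q :=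
  ⟨by simp, by simp [List.idxOf_cons, beq_iff_eq, hpu.symm, hqu.symm, hqp.symm]⟩

lemma notLP_tail {p q : H} (h : p ≠ q) : ¬ ListPref [p, q] q p := by
  rintro ⟨-, hlt⟩
  simp [List.idxOf_cons, beq_iff_eq, h] at hlt

lemma card_assignedTo_le_one {M : Finset (R × H)} {h : H}
    (hyp : ∀ r1 r2, (r1, h) ∈ M → (r2, h) ∈ M → r1 = r2) :
    (HRRC.assignedTo M h).card ≤ 1 :=
  Finset.card_le_one.2 fun a ha b hb =>
    hyp a b (mem_assignedTo.1 ha) (mem_assignedTo.1 hb)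

lemma card_assignedIn_le_one {M : Finset (R × H)} {E : Finset H}
    (hyp : ∀ r1 r2 h1 h2, h1 ∈ E → h2 ∈ E → (r1, h1) ∈ M → (r2, h2) ∈ M → r1 = r2) :
    (HRRC.assignedIn M E).card ≤ 1 := by
  refine Finset.card_le_one.2 fun a ha b hb => ?_
  obtain ⟨h1, hh1, hm1⟩ := mem_assignedIn.1 ha
  obtain ⟨h2, hh2, hm2⟩ := mem_assignedIn.1 hb
  exact hyp a b h1 h2 hh1 hh2 hm1 hm2

lemma assignedTo_subset {M : Finset (R × H)} {h : H} {S : Finset R}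
    (hyp : ∀ r, (r, h) ∈ M → r ∈ S) : HRRC.assignedTo M h ⊆ S := fun r hr =>
  hyp r (mem_assignedTo.1 hr)

lemma fin3_cases01 {l : Fin 3} (h : (l : ℕ) < 2) : l = 0 ∨ l = 1 := by
  rcases (by omega : (l : ℕ) = 0 ∨ (l : ℕ) = 1) with h' | h'
  · left; rw [Fin.ext_iff]; simpa using h'
  · right; rw [Fin.ext_iff]; simpa using h'

lemma fin3_eq2 {l : Fin 3} (h : ¬ (l : ℕ) < 2) : l = 2 := by
  rw [Fin.ext_iff]; simp; omega

lemma notLP_head {l : List H} {p x : H} (hx : x ≠ p) : ¬ ListPref (p :: l) x p := by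
  rintro ⟨-, hlt⟩
  rw [List.idxOf_cons_self] at hlt
  have : List.idxOf x (p :: l) = List.idxOf x l + 1 := by
    simp [List.idxOf_cons, beq_iff_eq, Ne.symm hx]
  omega

lemma notLP_second {u p x : H} {l : List H} (hxu : x ≠ u) (hxp : x ≠ p) (hpu : p ≠ u) :
    ¬ ListPref (u :: p :: l) x p := by
  rintro ⟨-, hlt⟩
  have h1 : List.idxOf x (u :: p :: l) = List.idxOf x l + 2 := by
    simp [List.idxOf_cons, beq_iff_eq, Ne.symm hxu, Ne.symm hxp]
  have h2 : List.idxOf p (u :: p :: l) = 1 := by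
    simp [List.idxOf_cons, beq_iff_eq, Ne.symm hpu]
  omega

lemma assignedTo_card_zero {M : Finset (R × H)} {h : H} (hyp : ∀ r, (r, h) ∉ M) :
    (HRRC.assignedTo M h).card = 0 :=
  Finset.card_eq_zero.2 (Finset.eq_empty_iff_forall_notMem.2 fun r hr =>
    hyp r (mem_assignedTo.1 hr))

end Generic

namespace PPN

variable {n m : ℕ} (m₂ : ℕ) (v : Fin m → Fin 3 → Fin n) (pol : Fin m → Fin 3 → Bool)
  (occ : Fin n → Fin 3 → Fin m × Fin 3) (kIdx : Fin m → Fin 3 → Fin 3)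
  (σ : Fin n → Bool)

/-- truth value of the `l`-th literal of clause `j` under assignment `σ`. -/
def lit (j : Fin m) (l : Fin 3) : Bool := if pol j l then σ (v j l) else !(σ (v j l))

/-- the intended assignment of residents to hospitals. -/
def asg : Res12 n m → Option (Hos12 n m)
  | .e i t => some (if σ i then .b i t else .x i 2)
  | .c j l =>
      if (l : ℕ) < (if (j : ℕ) < m₂ then 2 else 3) then
        if lit v pol σ j l then
          if (l : ℕ) < 2 then
            if ((j : ℕ) < m₂ ∨ lit v pol σ j 2 = false) ∧
                ((l : ℕ) = 0 ∨ lit v pol σ j 0 = false)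
            then some (.a j 0) else none
          else some (.a j 2)
        else some (.x (v j l) (kIdx j l))
      else none
  | .d j => if (j : ℕ) < m₂ then none
      else some (if lit v pol σ j 2 then .a j 1 else .a j 2)
  | .z j => some (.g2 j)
  | _ => none

/-- the stable matching built from a satisfying assignment. -/
def bigM : Finset (Res12 n m × Hos12 n m) :=
  Finset.univ.biUnion fun r => (asg m₂ v pol kIdx σ r).elim ∅ fun h => {(r, h)}

/-- the assignment extracted from a matching. -/
def extAsg (M : Finset (Res12 n m × Hos12 n m)) : Fin n → Bool := fun i =>
  decide ((Res12.e i 0, Hos12.b i 0) ∈ M ∨ (Res12.e i 1, Hos12.b i 1) ∈ M)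

lemma mem_bigM {r : Res12 n m} {h : Hos12 n m} :
    (r, h) ∈ bigM m₂ v pol kIdx σ ↔ asg m₂ v pol kIdx σ r = some h := by
  simp only [bigM, Finset.mem_biUnion, Finset.mem_univ, true_and]
  constructor
  · rintro ⟨r', hr'⟩
    cases hasg : asg m₂ v pol kIdx σ r' <;> rw [hasg] at hr' <;>
      simp only [Option.elim] at hr'
    · simp at hr'
    · rcases Finset.mem_singleton.1 hr' with h'
      rcases Prod.mk.injEq .. ▸ h' with ⟨rfl, rfl⟩
      exact hasg
  · intro hasg
    exact ⟨r, by rw [hasg]; simp⟩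

end PPN

namespace PPN

/-- Bundled structural hypotheses of a PPN-3-SAT instance. -/
structure Hyps {n m : ℕ} (m₂ : ℕ) (v : Fin m → Fin 3 → Fin n) (pol : Fin m → Fin 3 → Bool)
    (occ : Fin n → Fin 3 → Fin m × Fin 3) (kIdx : Fin m → Fin 3 → Fin 3) : Prop where
  occValid : ∀ i k, ((occ i k).2 : ℕ) < (if ((occ i k).1 : ℕ) < m₂ then 2 else 3)
  occVar : ∀ i k, v (occ i k).1 (occ i k).2 = i
  occPol : ∀ i k, pol (occ i k).1 (occ i k).2 = decide ((k : ℕ) < 2)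
  occInj : ∀ i, Function.Injective (occ i)
  kIdx_eq : ∀ (j : Fin m) (l : Fin 3), (l : ℕ) < (if (j : ℕ) < m₂ then 2 else 3) →
    occ (v j l) (kIdx j l) = (j, l)

variable {n m : ℕ} {m₂ : ℕ} {v : Fin m → Fin 3 → Fin n} {pol : Fin m → Fin 3 → Bool}
  {occ : Fin n → Fin 3 → Fin m × Fin 3} {kIdx : Fin m → Fin 3 → Fin 3}
  {σ : Fin n → Bool}

local notation "M*" => bigM m₂ v pol kIdx σ
local notation "lit*" => lit v pol σ

namespace Hyps

variable (H : Hyps m₂ v pol occ kIdx)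
include H
set_option linter.unusedSectionVars false

lemma lit_occ (i : Fin n) (k : Fin 3) :
    lit v pol σ (occ i k).1 (occ i k).2 = if (k : ℕ) < 2 then σ i else !(σ i) := by
  unfold lit
  rw [H.occPol, H.occVar]
  by_cases hk : (k : ℕ) < 2 <;> simp [hk]

lemma kIdx_val (j : Fin m) (l : Fin 3) (hv : (l : ℕ) < (if (j : ℕ) < m₂ then 2 else 3)) :
    ((kIdx j l : ℕ) < 2 ↔ pol j l = true) := by
  have h := H.occPol (v j l) (kIdx j l)
  rw [H.kIdx_eq j l hv] at h
  simp only [h]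
  by_cases hk : (kIdx j l : ℕ) < 2 <;> simp [hk]

lemma lit_eq (j : Fin m) (l : Fin 3) (hv : (l : ℕ) < (if (j : ℕ) < m₂ then 2 else 3)) :
    lit v pol σ j l = if ((kIdx j l : ℕ)) < 2 then σ (v j l) else !(σ (v j l)) := by
  have h := H.lit_occ (σ := σ) (v j l) (kIdx j l)
  rw [H.kIdx_eq j l hv] at h
  simpa using h


omit H in
lemma uniqM {r : Res12 n m} {h1 h2 : Hos12 n m}
    (h1m : (r, h1) ∈ M*) (h2m : (r, h2) ∈ M*) : h1 = h2 := by
  rw [mem_bigM] at h1m h2m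
  rw [h1m] at h2m
  exact Option.some.injEq .. ▸ h2m

omit H in
lemma occu_b {r : Res12 n m} {i : Fin n} {t : Fin 2} (hm : (r, Hos12.b i t) ∈ M*) :
    r = Res12.e i t ∧ σ i = true := by
  rw [mem_bigM] at hm
  cases r with
  | e i' t' =>
    simp only [asg, Option.some.injEq] at hm
    split_ifs at hm with h <;> simp_all [Hos12.b.injEq]
  | c j l =>
    exfalso; simp only [asg] at hm; split_ifs at hm <;> simp at hm
  | d j => exfalso; simp only [asg] at hm; split_ifs at hm <;> simp at hm
  | g1 j => simp [asg] at hm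
  | g3 j => simp [asg] at hm
  | z j => simp [asg] at hm

lemma occu_x01 {r : Res12 n m} {i : Fin n} {k : Fin 3} (hk : (k : ℕ) < 2)
    (hm : (r, Hos12.x i k) ∈ M*) :
    σ i = false ∧ r = Res12.c (occ i k).1 (occ i k).2 := by
  rw [mem_bigM] at hm
  cases r with
  | e i' t' =>
    exfalso; simp only [asg, Option.some.injEq] at hm
    split_ifs at hm <;> simp_all [Fin.ext_iff] <;> omega
  | c j l =>
    simp only [asg] at hm
    by_cases h1 : (l : ℕ) < (if (j : ℕ) < m₂ then 2 else 3)
    case neg => rw [if_neg h1] at hm; exact absurd hm (by simp)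
    rw [if_pos h1] at hm
    by_cases h2 : lit v pol σ j l = true
    · rw [if_pos h2] at hm
      exfalso; split_ifs at hm <;> simp at hm
    · rw [if_neg h2] at hm
      simp only [Option.some.injEq, Hos12.x.injEq] at hm
      obtain ⟨hv', hkk⟩ := hm
      have hocc := H.kIdx_eq j l h1
      rw [hv', hkk] at hocc
      refine ⟨?_, by rw [hocc]⟩
      have hle := H.lit_eq (σ := σ) j l h1
      rw [hkk, hv', if_pos hk] at hle
      rw [← hle]
      exact Bool.not_eq_true _ ▸ h2
  | d j => exfalso; simp only [asg] at hm; split_ifs at hm <;> simp at hm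
  | g1 j => simp [asg] at hm
  | g3 j => simp [asg] at hm
  | z j => simp [asg] at hm

lemma occu_x2 {r : Res12 n m} {i : Fin n} (hm : (r, Hos12.x i 2) ∈ M*) :
    (σ i = true ∧ r = Res12.c (occ i 2).1 (occ i 2).2) ∨
      (σ i = false ∧ (r = Res12.e i 0 ∨ r = Res12.e i 1)) := by
  rw [mem_bigM] at hm
  cases r with
  | e i' t' =>
    simp only [asg, Option.some.injEq] at hm
    by_cases h : σ i' = true
    · rw [if_pos h] at hm; exact absurd hm (by simp)
    · rw [if_neg h] at hm
      simp only [Hos12.x.injEq] at hm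
      obtain ⟨rfl, -⟩ := hm
      right
      refine ⟨by simpa using h, ?_⟩
      fin_cases t' <;> simp
  | c j l =>
    simp only [asg] at hm
    by_cases h1 : (l : ℕ) < (if (j : ℕ) < m₂ then 2 else 3)
    case neg => rw [if_neg h1] at hm; exact absurd hm (by simp)
    rw [if_pos h1] at hm
    by_cases h2 : lit v pol σ j l = true
    · rw [if_pos h2] at hm
      exfalso; split_ifs at hm <;> simp at hm
    · rw [if_neg h2] at hm
      simp only [Option.some.injEq, Hos12.x.injEq] at hm
      obtain ⟨hv', hkk⟩ := hm
      have hocc := H.kIdx_eq j l h1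
      rw [hv', hkk] at hocc
      left
      refine ⟨?_, by rw [hocc]⟩
      have hle := H.lit_eq (σ := σ) j l h1
      rw [hkk, hv'] at hle
      simp only [Fin.val_two, Nat.lt_irrefl, if_false] at hle
      rw [Bool.not_eq_true _] at h2
      rw [h2] at hle
      simpa using hle.symm
  | d j => exfalso; simp only [asg] at hm; split_ifs at hm <;> simp at hm
  | g1 j => simp [asg] at hm
  | g3 j => simp [asg] at hm
  | z j => simp [asg] at hm

omit H in
lemma occu_a0 {r : Res12 n m} {j : Fin m} (hm : (r, Hos12.a j 0) ∈ M*) :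
    r = Res12.c j (if lit v pol σ j 0 = true then 0 else 1) ∧
      ((j : ℕ) < m₂ ∨ lit v pol σ j 2 = false) ∧
      (lit v pol σ j 0 = true ∨ lit v pol σ j 1 = true) := by
  rw [mem_bigM] at hm
  cases r with
  | e i' t' =>
    exfalso; simp only [asg, Option.some.injEq] at hm; split_ifs at hm <;> simp at hm
  | c j' l =>
    simp only [asg] at hm
    by_cases h1 : (l : ℕ) < (if (j' : ℕ) < m₂ then 2 else 3)
    case neg => rw [if_neg h1] at hm; exact absurd hm (by simp)
    rw [if_pos h1] at hm
    by_cases h2 : lit v pol σ j' l = true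
    · rw [if_pos h2] at hm
      by_cases h3 : (l : ℕ) < 2
      · rw [if_pos h3] at hm
        by_cases h4 : ((j' : ℕ) < m₂ ∨ lit v pol σ j' 2 = false) ∧
            ((l : ℕ) = 0 ∨ lit v pol σ j' 0 = false)
        · rw [if_pos h4] at hm
          simp only [Option.some.injEq, Hos12.a.injEq] at hm
          obtain ⟨rfl, -⟩ := hm
          rcases h4 with ⟨hslot, hsel⟩
          by_cases h0 : lit v pol σ j' 0 = true
          · have hl : l = 0 := by
              rcases hsel with hh | hh
              · rw [Fin.ext_iff]; simpa using hh
              · rw [h0] at hh; cases hh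
            subst hl
            exact ⟨by simp [h0], hslot, Or.inl h0⟩
          · have h0' : lit v pol σ j' 0 = false := by
              simpa using h0
            have hl : l = 1 := by
              have hne : (l : ℕ) ≠ 0 := by
                intro hc
                have hl0 : l = 0 := by rw [Fin.ext_iff]; simpa using hc
                rw [hl0] at h2; rw [h2] at h0'; cases h0'
              rw [Fin.ext_iff]; simp; omega
            subst hl
            exact ⟨by simp [h0'], hslot, Or.inr h2⟩
        · rw [if_neg h4] at hm; exact absurd hm (by simp)
      · rw [if_neg h3] at hm; exact absurd hm (by simp [Fin.ext_iff])
    · rw [if_neg h2] at hm; exact absurd hm (by simp)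
  | d j' =>
    exfalso; simp only [asg] at hm
    split_ifs at hm <;> simp [Fin.ext_iff] at hm
  | g1 j => simp [asg] at hm
  | g3 j => simp [asg] at hm
  | z j => simp [asg] at hm


omit H in
lemma occu_a12_aux {r : Res12 n m} {j : Fin m} {t : Fin 3} (ht : (t : ℕ) ≠ 0)
    (hm : (r, Hos12.a j t) ∈ M*) :
    ¬ (j : ℕ) < m₂ ∧
      ((t = 2 ∧ r = Res12.c j 2 ∧ lit v pol σ j 2 = true) ∨
       (r = Res12.d j ∧ ((t = 1 ∧ lit v pol σ j 2 = true) ∨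
          (t = 2 ∧ lit v pol σ j 2 = false)))) := by
  rw [mem_bigM] at hm
  cases r with
  | e i' t' =>
    exfalso; simp only [asg, Option.some.injEq] at hm; split_ifs at hm <;> simp at hm
  | c j' l =>
    simp only [asg] at hm
    by_cases h1 : (l : ℕ) < (if (j' : ℕ) < m₂ then 2 else 3)
    case neg => rw [if_neg h1] at hm; exact absurd hm (by simp)
    rw [if_pos h1] at hm
    by_cases h2 : lit v pol σ j' l = true
    case neg => rw [if_neg h2] at hm; exact absurd hm (by simp)
    rw [if_pos h2] at hm
    by_cases h3 : (l : ℕ) < 2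
    · rw [if_pos h3] at hm
      exfalso
      split_ifs at hm <;> simp only [Option.some.injEq, Hos12.a.injEq] at hm
      exact ht (by rw [← hm.2]; rfl)
    · rw [if_neg h3] at hm
      simp only [Option.some.injEq, Hos12.a.injEq] at hm
      obtain ⟨rfl, rfl⟩ := hm
      have hl : l = 2 := by rw [Fin.ext_iff]; simp; omega
      subst hl
      have hj : ¬ (j' : ℕ) < m₂ := by
        intro hc; rw [if_pos hc] at h1; omega
      exact ⟨hj, Or.inl ⟨rfl, rfl, h2⟩⟩
  | d j' =>
    simp only [asg] at hm
    by_cases h1 : (j' : ℕ) < m₂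
    case pos => rw [if_pos h1] at hm; exact absurd hm (by simp)
    rw [if_neg h1] at hm
    by_cases h2 : lit v pol σ j' 2 = true
    · rw [if_pos h2] at hm
      simp only [Option.some.injEq, Hos12.a.injEq] at hm
      obtain ⟨rfl, rfl⟩ := hm
      exact ⟨h1, Or.inr ⟨rfl, Or.inl ⟨rfl, h2⟩⟩⟩
    · rw [if_neg h2] at hm
      simp only [Option.some.injEq, Hos12.a.injEq] at hm
      obtain ⟨rfl, rfl⟩ := hm
      exact ⟨h1, Or.inr ⟨rfl, Or.inr ⟨rfl, by simpa using h2⟩⟩⟩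
  | g1 j => simp [asg] at hm
  | g3 j => simp [asg] at hm
  | z j => simp [asg] at hm

omit H in
lemma occu_a1 {r : Res12 n m} {j : Fin m} (hm : (r, Hos12.a j 1) ∈ M*) :
    r = Res12.d j ∧ ¬ (j : ℕ) < m₂ ∧ lit v pol σ j 2 = true := by
  obtain ⟨hj, hc⟩ := occu_a12_aux (t := 1) (by simp) hm
  rcases hc with ⟨ht, -⟩ | ⟨hr, hc⟩
  · exact absurd ht (by decide)
  · rcases hc with ⟨-, hl⟩ | ⟨ht, -⟩
    · exact ⟨hr, hj, hl⟩
    · exact absurd ht (by decide)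

omit H in
lemma occu_a2 {r : Res12 n m} {j : Fin m} (hm : (r, Hos12.a j 2) ∈ M*) :
    ¬ (j : ℕ) < m₂ ∧ ((r = Res12.c j 2 ∧ lit v pol σ j 2 = true) ∨
      (r = Res12.d j ∧ lit v pol σ j 2 = false)) := by
  obtain ⟨hj, hc⟩ := occu_a12_aux (t := 2) (by simp) hm
  rcases hc with ⟨-, hr, hl⟩ | ⟨hr, hc⟩
  · exact ⟨hj, Or.inl ⟨hr, hl⟩⟩
  · rcases hc with ⟨ht, -⟩ | ⟨-, hl⟩
    · exact absurd ht (by decide)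
    · exact ⟨hj, Or.inr ⟨hr, hl⟩⟩

omit H in
lemma occu_y {r : Res12 n m} {j : Fin m} (hm : (r, Hos12.y j) ∈ M*) : False := by
  rw [mem_bigM] at hm
  cases r with
  | e i' t' => simp only [asg, Option.some.injEq] at hm; split_ifs at hm <;> simp at hm
  | c j' l => simp only [asg] at hm; split_ifs at hm <;> simp at hm
  | d j' => simp only [asg] at hm; split_ifs at hm <;> simp at hm
  | g1 j => simp [asg] at hm
  | g3 j => simp [asg] at hm
  | z j => simp [asg] at hm

omit H in
lemma occu_g4 {r : Res12 n m} {j : Fin m} (hm : (r, Hos12.g4 j) ∈ M*) : False := by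
  rw [mem_bigM] at hm
  cases r with
  | e i' t' => simp only [asg, Option.some.injEq] at hm; split_ifs at hm <;> simp at hm
  | c j' l => simp only [asg] at hm; split_ifs at hm <;> simp at hm
  | d j' => simp only [asg] at hm; split_ifs at hm <;> simp at hm
  | g1 j => simp [asg] at hm
  | g3 j => simp [asg] at hm
  | z j => simp [asg] at hm

omit H in
lemma occu_g2 {r : Res12 n m} {j : Fin m} (hm : (r, Hos12.g2 j) ∈ M*) :
    r = Res12.z j := by
  rw [mem_bigM] at hm
  cases r with
  | e i' t' => simp only [asg, Option.some.injEq] at hm; split_ifs at hm <;> simp at hm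
  | c j' l => simp only [asg] at hm; split_ifs at hm <;> simp at hm
  | d j' => simp only [asg] at hm; split_ifs at hm <;> simp at hm
  | g1 j => simp [asg] at hm
  | g3 j => simp [asg] at hm
  | z j' => simp only [asg, Option.some.injEq, Hos12.g2.injEq] at hm; rw [hm]


lemma isMatching : (ppnInstance232 m₂ v occ kIdx).IsMatching M* := by
  refine ⟨?_, ?_, ?_⟩
  · rintro ⟨r, h⟩ hm
    have hasg := (mem_bigM m₂ v pol kIdx σ (r := r) (h := h)).1 hm
    show h ∈ prefRes12 m₂ v kIdx r ∧ r ∈ prefHos12 m₂ occ h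
    cases r with
    | e i t =>
      simp only [asg, Option.some.injEq] at hasg
      subst hasg
      by_cases hσ : σ i = true
      · rw [if_pos hσ]
        fin_cases t <;> simp [prefRes12, prefHos12]
      · rw [if_neg hσ]
        fin_cases t <;> simp [prefRes12, prefHos12]
    | c j l =>
      simp only [asg] at hasg
      by_cases h1 : (l : ℕ) < (if (j : ℕ) < m₂ then 2 else 3)
      case neg => rw [if_neg h1] at hasg; exact absurd hasg (by simp)
      rw [if_pos h1] at hasg
      by_cases h2 : lit v pol σ j l = true
      · rw [if_pos h2] at hasg
        by_cases h3 : (l : ℕ) < 2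
        · rw [if_pos h3] at hasg
          by_cases h4 : ((j : ℕ) < m₂ ∨ lit v pol σ j 2 = false) ∧
              ((l : ℕ) = 0 ∨ lit v pol σ j 0 = false)
          case neg => rw [if_neg h4] at hasg; exact absurd hasg (by simp)
          rw [if_pos h4] at hasg
          simp only [Option.some.injEq] at hasg
          subst hasg
          constructor
          · simp [prefRes12, h3]
          · have hll := fin3_cases01 h3
            simp only [prefHos12]
            rcases hll with rfl | rfl <;> simp
        · rw [if_neg h3] at hasg
          simp only [Option.some.injEq] at hasg
          subst hasg
          have hl : l = 2 := by rw [Fin.ext_iff]; simp; omega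
          subst hl
          have hj : ¬ (j : ℕ) < m₂ := by intro hc; rw [if_pos hc] at h1; omega
          constructor
          · simp [prefRes12, hj]
          · simp [prefHos12, hj]
      · rw [if_neg h2] at hasg
        simp only [Option.some.injEq] at hasg
        subst hasg
        constructor
        · by_cases h3 : (l : ℕ) < 2
          · simp [prefRes12, h3]
          · have hl : l = 2 := by rw [Fin.ext_iff]; simp; omega
            subst hl
            have hj : ¬ (j : ℕ) < m₂ := by intro hc; rw [if_pos hc] at h1; omega
            simp [prefRes12, hj]
        · have hocc := H.kIdx_eq j l h1
          by_cases h3 : (kIdx j l : ℕ) < 2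
          · simp only [prefHos12, if_pos h3, hocc, List.mem_singleton]
          · simp only [prefHos12, if_neg h3, hocc]
            simp
    | d j =>
      simp only [asg] at hasg
      by_cases h1 : (j : ℕ) < m₂
      case pos => rw [if_pos h1] at hasg; exact absurd hasg (by simp)
      rw [if_neg h1] at hasg
      simp only [Option.some.injEq] at hasg
      subst hasg
      by_cases h2 : lit v pol σ j 2 = true <;>
        simp [h2, prefRes12, prefHos12, h1]
    | g1 j => simp [asg] at hasg
    | g3 j => simp [asg] at hasg
    | z j =>
      simp only [asg, Option.some.injEq] at hasg
      subst hasg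
      simp [prefRes12, prefHos12]
  · intro r h h' hm hm'
    exact uniqM hm hm'
  · intro h
    show (HRRC.assignedTo M* h).card ≤ (ppnInstance232 m₂ v occ kIdx).q h
    cases h with
    | b i t =>
      exact le_trans (card_assignedTo_le_one fun r1 r2 h1 h2 => by
        rw [(occu_b h1).1, (occu_b h2).1]) (by norm_num [ppnInstance232])
    | x i k =>
      by_cases hk : (k : ℕ) < 2
      · refine le_trans (card_assignedTo_le_one fun r1 r2 h1 h2 => by
          rw [(H.occu_x01 hk h1).2, (H.occu_x01 hk h2).2]) ?_
        have : (k : ℕ) ≠ 2 := by omega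
        simp [ppnInstance232, this]
      · have hk2 : k = 2 := by rw [Fin.ext_iff]; simp; omega
        subst hk2
        have hsub : HRRC.assignedTo M* (Hos12.x i 2) ⊆
            {Res12.c (occ i 2).1 (occ i 2).2, Res12.e i 0, Res12.e i 1} := by
          refine assignedTo_subset fun r hr => ?_
          rcases H.occu_x2 hr with ⟨-, rfl⟩ | ⟨-, rfl | rfl⟩ <;> simp
        by_cases hσ : σ i = true
        · refine le_trans (card_assignedTo_le_one fun r1 r2 h1 h2 => ?_) (by
            simp [ppnInstance232])
          rcases H.occu_x2 h1 with ⟨-, rfl⟩ | ⟨hσ', -⟩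
          · rcases H.occu_x2 h2 with ⟨-, rfl⟩ | ⟨hσ', -⟩
            · rfl
            · rw [hσ] at hσ'; cases hσ'
          · rw [hσ] at hσ'; cases hσ'
        · have hsub2 : HRRC.assignedTo M* (Hos12.x i 2) ⊆ {Res12.e i 0, Res12.e i 1} := by
            refine assignedTo_subset fun r hr => ?_
            rcases H.occu_x2 hr with ⟨hσ', -⟩ | ⟨-, rfl | rfl⟩
            · rw [hσ'] at hσ; exact absurd rfl hσ
            · simp
            · simp
          refine le_trans (Finset.card_le_card hsub2) (le_trans
            (Finset.card_insert_le _ _) ?_)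
          simp [ppnInstance232]
    | a j t =>
      refine le_trans (card_assignedTo_le_one ?_) (by simp [ppnInstance232])
      fin_cases t
      · intro r1 r2 h1 h2; rw [(occu_a0 h1).1, (occu_a0 h2).1]
      · intro r1 r2 h1 h2; rw [(occu_a1 h1).1, (occu_a1 h2).1]
      · intro r1 r2 h1 h2
        rcases (occu_a2 h1).2 with ⟨rfl, hl⟩ | ⟨rfl, hl⟩ <;>
          rcases (occu_a2 h2).2 with ⟨hr2, hl'⟩ | ⟨hr2, hl'⟩ <;>
          first
            | (exact hr2.symm)
            | (rw [hl] at hl'; cases hl')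
    | y j => exact le_trans (card_assignedTo_le_one fun r1 r2 h1 h2 =>
        absurd h1 (fun hc => occu_y hc)) (by simp [ppnInstance232])
    | g2 j =>
      exact le_trans (card_assignedTo_le_one fun r1 r2 h1 h2 => by
        rw [occu_g2 h1, occu_g2 h2]) (by simp [ppnInstance232])
    | g4 j => exact le_trans (card_assignedTo_le_one fun r1 r2 h1 h2 =>
        absurd h1 (fun hc => occu_g4 hc)) (by simp [ppnInstance232])


lemma feasCaps : (ppnInstance232 m₂ v occ kIdx).FeasibleCaps M* := by
  intro E hE
  show (HRRC.assignedIn M* E).card ≤ 1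
  rcases hE with ⟨i, hE | hE⟩ | ⟨j, ⟨hj, hE⟩ | ⟨hj, hE | hE⟩ | hE⟩ <;> subst hE <;>
    refine card_assignedIn_le_one fun r1 r2 h1 h2 hh1 hh2 hm1 hm2 => ?_ <;>
    simp only [Finset.mem_insert, Finset.mem_singleton] at hh1 hh2
  · rcases hh1 with rfl | rfl <;> rcases hh2 with rfl | rfl
    · rw [(occu_b hm1).1, (occu_b hm2).1]
    · exact absurd (H.occu_x01 (by simp) hm2).1 (by simp [(occu_b hm1).2])
    · exact absurd (H.occu_x01 (by simp) hm1).1 (by simp [(occu_b hm2).2])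
    · rw [(H.occu_x01 (by simp) hm1).2, (H.occu_x01 (by simp) hm2).2]
  · rcases hh1 with rfl | rfl <;> rcases hh2 with rfl | rfl
    · rw [(occu_b hm1).1, (occu_b hm2).1]
    · exact absurd (H.occu_x01 (by simp) hm2).1 (by simp [(occu_b hm1).2])
    · exact absurd (H.occu_x01 (by simp) hm1).1 (by simp [(occu_b hm2).2])
    · rw [(H.occu_x01 (by simp) hm1).2, (H.occu_x01 (by simp) hm2).2]
  · rcases hh1 with rfl | rfl <;> rcases hh2 with rfl | rfl
    · rw [(occu_a0 hm1).1, (occu_a0 hm2).1]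
    · exact absurd hm2 fun hc => occu_y hc
    · exact absurd hm1 fun hc => occu_y hc
    · exact absurd hm1 fun hc => occu_y hc
  · rcases hh1 with rfl | rfl <;> rcases hh2 with rfl | rfl
    · rw [(occu_a0 hm1).1, (occu_a0 hm2).1]
    · rcases (occu_a0 hm1).2.1 with hc | hc
      · exact absurd hc hj
      · rw [(occu_a1 hm2).2.2] at hc; cases hc
    · rcases (occu_a0 hm2).2.1 with hc | hc
      · exact absurd hc hj
      · rw [(occu_a1 hm1).2.2] at hc; cases hc
    · rw [(occu_a1 hm1).1, (occu_a1 hm2).1]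
  · rcases hh1 with rfl | rfl <;> rcases hh2 with rfl | rfl
    · rcases (occu_a2 hm1).2 with ⟨rfl, hl⟩ | ⟨rfl, hl⟩ <;>
        rcases (occu_a2 hm2).2 with ⟨hr2, hl'⟩ | ⟨hr2, hl'⟩ <;>
        first
          | (exact hr2.symm)
          | (rw [hl] at hl'; cases hl')
    · exact absurd hm2 fun hc => occu_y hc
    · exact absurd hm1 fun hc => occu_y hc
    · exact absurd hm1 fun hc => occu_y hc
  · rcases hh1 with rfl | rfl <;> rcases hh2 with rfl | rfl
    · rw [occu_g2 hm1, occu_g2 hm2]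
    · exact absurd hm2 fun hc => occu_g4 hc
    · exact absurd hm1 fun hc => occu_g4 hc
    · exact absurd hm1 fun hc => occu_g4 hc


omit H in
lemma memM_of {r : Res12 n m} {h : Hos12 n m}
    (hasg : asg m₂ v pol kIdx σ r = some h) : (r, h) ∈ M* :=
  (mem_bigM m₂ v pol kIdx σ).2 hasg

omit H in
lemma mem_e_b {i : Fin n} {t : Fin 2} (hσ : σ i = true) :
    (Res12.e i t, Hos12.b i t) ∈ M* := memM_of (by simp [asg, hσ])

omit H in
lemma mem_e_x {i : Fin n} {t : Fin 2} (hσ : σ i = false) :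
    (Res12.e i t, Hos12.x i 2) ∈ M* := memM_of (by simp [asg, hσ])

omit H in
lemma mem_z {j : Fin m} : (Res12.z j, Hos12.g2 j) ∈ M* := memM_of (by simp [asg])

omit H in
lemma mem_c_x {j : Fin m} {l : Fin 3} (hv : (l : ℕ) < (if (j : ℕ) < m₂ then 2 else 3))
    (hlit : lit v pol σ j l = false) :
    (Res12.c j l, Hos12.x (v j l) (kIdx j l)) ∈ M* :=
  memM_of (by simp [asg, hv, hlit])

lemma mem_cocc_x {i : Fin n} {k : Fin 3} (hσ : σ i = false) (hk : (k : ℕ) < 2) :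
    (Res12.c (occ i k).1 (occ i k).2, Hos12.x i k) ∈ M* := by
  have hv := H.occValid i k
  have hlit : lit v pol σ (occ i k).1 (occ i k).2 = false := by
    rw [H.lit_occ, if_pos hk]; exact hσ
  have := mem_c_x (m₂ := m₂) (kIdx := kIdx) hv hlit
  rw [H.occVar] at this
  have hkk : kIdx (occ i k).1 (occ i k).2 = k := by
    apply H.occInj i
    have h2 := H.kIdx_eq (occ i k).1 (occ i k).2 hv
    rw [H.occVar] at h2
    rw [h2]
  rw [hkk] at this
  exact this

omit H in
lemma mem_c_a0 {j : Fin m} (hslot : (j : ℕ) < m₂ ∨ lit v pol σ j 2 = false)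
    (hor : lit v pol σ j 0 = true ∨ lit v pol σ j 1 = true) :
    (Res12.c j (if lit v pol σ j 0 = true then 0 else 1), Hos12.a j 0) ∈ M* := by
  by_cases h0 : lit v pol σ j 0 = true
  · refine memM_of ?_
    rw [if_pos h0]
    have hv : ((0 : Fin 3) : ℕ) < (if (j : ℕ) < m₂ then 2 else 3) := by
      split <;> simp
    simp [asg, hv, h0, hslot]
    split <;> norm_num
  · have h1 : lit v pol σ j 1 = true := by
      rcases hor with h | h
      · exact absurd h h0
      · exact h
    refine memM_of ?_
    rw [if_neg h0]
    have hv : ((1 : Fin 3) : ℕ) < (if (j : ℕ) < m₂ then 2 else 3) := by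
      split <;> simp
    have h0' : lit v pol σ j 0 = false := by simpa using h0
    simp [asg, hv, h1, h0', hslot]
    split <;> norm_num

omit H in
lemma mem_c_a2 {j : Fin m} (hj : ¬ (j : ℕ) < m₂) (hlit : lit v pol σ j 2 = true) :
    (Res12.c j 2, Hos12.a j 2) ∈ M* := by
  refine memM_of ?_
  have hv : ((2 : Fin 3) : ℕ) < (if (j : ℕ) < m₂ then 2 else 3) := by
    rw [if_neg hj]; simp
  simp [asg, hv, hlit, hj]

omit H in
lemma mem_d_a1 {j : Fin m} (hj : ¬ (j : ℕ) < m₂) (hlit : lit v pol σ j 2 = true) :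
    (Res12.d j, Hos12.a j 1) ∈ M* := memM_of (by simp [asg, hj, hlit])

omit H in
lemma mem_d_a2 {j : Fin m} (hj : ¬ (j : ℕ) < m₂) (hlit : lit v pol σ j 2 = false) :
    (Res12.d j, Hos12.a j 2) ∈ M* := memM_of (by simp [asg, hj, hlit])

omit H in
lemma region_bx {i : Fin n} (t : Fin 2) :
    (if (t : ℕ) = 0 then {Hos12.b i 0, Hos12.x i 0} else {Hos12.b i 1, Hos12.x i 1} :
      Finset (Hos12 n m)) ∈ regions12 m₂ := by
  fin_cases t
  · exact Or.inl ⟨i, Or.inl (by simp)⟩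
  · exact Or.inl ⟨i, Or.inr (by simp)⟩

omit H in
lemma region_a0y {j : Fin m} (hj : (j : ℕ) < m₂) :
    ({Hos12.a j 0, Hos12.y j} : Finset (Hos12 n m)) ∈ regions12 m₂ :=
  Or.inr ⟨j, Or.inl ⟨hj, rfl⟩⟩

omit H in
lemma region_a0a1 {j : Fin m} (hj : ¬ (j : ℕ) < m₂) :
    ({Hos12.a j 0, Hos12.a j 1} : Finset (Hos12 n m)) ∈ regions12 m₂ :=
  Or.inr ⟨j, Or.inr (Or.inl ⟨hj, Or.inl rfl⟩)⟩

omit H in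
lemma region_a2y {j : Fin m} (hj : ¬ (j : ℕ) < m₂) :
    ({Hos12.a j 2, Hos12.y j} : Finset (Hos12 n m)) ∈ regions12 m₂ :=
  Or.inr ⟨j, Or.inr (Or.inl ⟨hj, Or.inr rfl⟩)⟩

omit H in
lemma region_g {j : Fin m} :
    ({Hos12.g2 j, Hos12.g4 j} : Finset (Hos12 n m)) ∈ regions12 m₂ :=
  Or.inr ⟨j, Or.inr (Or.inr rfl)⟩

omit H in
lemma not_moveFeas {r : Res12 n m} {h : Hos12 n m} {r'' : Res12 n m} {h'' : Hos12 n m}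
    (hne : r'' ≠ r) (hm : (r'', h'') ∈ M*) {E : Finset (Hos12 n m)}
    (hE : E ∈ regions12 m₂) (hhE : h ∈ E) (hh''E : h'' ∈ E) :
    ¬ (ppnInstance232 m₂ v occ kIdx).FeasibleCaps (HRRC.move M* r h) := by
  intro hfeas
  have hle := hfeas E hE
  have h2 := two_le_card_assignedIn (M := HRRC.move M* r h) (Ne.symm hne)
    (mem_move.2 (Or.inr rfl)) (mem_move.2 (Or.inl ⟨hm, hne⟩)) hhE hh''E
  have : (ppnInstance232 m₂ v occ kIdx).cap E = 1 := rfl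
  omega

omit H in
lemma not_hcap1 {h : Hos12 n m} {r o : Res12 n m} (hocc : (o, h) ∈ M*)
    (hall : ∀ r', (r', h) ∈ M* → r' = o)
    (hq : (ppnInstance232 m₂ v occ kIdx).q h = 1)
    (hnp : ¬ ListPref (prefHos12 m₂ occ h) r o) :
    ¬ ((HRRC.assignedTo M* h).card < (ppnInstance232 m₂ v occ kIdx).q h ∨
        ∃ r' ∈ HRRC.assignedTo M* h, ListPref (prefHos12 m₂ occ h) r r') := by
  rintro (hlt | ⟨r', hr', hlp⟩)
  · rw [hq] at hlt
    have : o ∈ HRRC.assignedTo M* h := mem_assignedTo.2 hocc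
    have := Finset.card_pos.2 ⟨o, this⟩
    omega
  · rw [hall r' (mem_assignedTo.1 hr')] at hlp
    exact hnp hlp


omit H in
lemma inst_prefR : (ppnInstance232 m₂ v occ kIdx).prefR = prefRes12 m₂ v kIdx := rfl

omit H in
lemma inst_prefH : (ppnInstance232 m₂ v occ kIdx).prefH = prefHos12 m₂ occ := rfl

omit H in
lemma hbet_contra {r : Res12 n m} {h h₀ : Hos12 n m} (hm : (r, h₀) ∈ M*)
    (hnp : ¬ ListPref (prefRes12 m₂ v kIdx r) h h₀)
    (hbet : (∀ h', (r, h') ∉ M*) ∨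
      ∃ h', (r, h') ∈ M* ∧ ListPref (prefRes12 m₂ v kIdx r) h h') : False := by
  rcases hbet with hun | ⟨h', hm', hlp⟩
  · exact hun h₀ hm
  · rw [uniqM hm' hm] at hlp; exact hnp hlp

omit H in
lemma mem_c_a0' {j : Fin m} {l : Fin 3} (hv : (l : ℕ) < (if (j : ℕ) < m₂ then 2 else 3))
    (hlit : lit v pol σ j l = true) (h3 : (l : ℕ) < 2)
    (hslot : (j : ℕ) < m₂ ∨ lit v pol σ j 2 = false)
    (hsel : (l : ℕ) = 0 ∨ lit v pol σ j 0 = false) :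
    (Res12.c j l, Hos12.a j 0) ∈ M* := by
  refine memM_of ?_
  simp only [asg, if_pos hv, if_pos hlit, if_pos h3]
  rw [if_pos (⟨hslot, hsel⟩ : _ ∧ _)]

/-- refutation of a strong blocking pair `(c j l, x (v j l) (kIdx j l))`. -/
lemma c_x_refute {j : Fin m} {l : Fin 3}
    (hv : (l : ℕ) < (if (j : ℕ) < m₂ then 2 else 3))
    (hnm : (Res12.c j l, Hos12.x (v j l) (kIdx j l)) ∉ M*)
    (hcap : (HRRC.assignedTo M* (Hos12.x (v j l) (kIdx j l))).card <
        (ppnInstance232 m₂ v occ kIdx).q (Hos12.x (v j l) (kIdx j l)) ∨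
      ∃ r' ∈ HRRC.assignedTo M* (Hos12.x (v j l) (kIdx j l)),
        ListPref (prefHos12 m₂ occ (Hos12.x (v j l) (kIdx j l))) (Res12.c j l) r')
    (hstr : (ppnInstance232 m₂ v occ kIdx).FeasibleCaps
        (HRRC.move M* (Res12.c j l) (Hos12.x (v j l) (kIdx j l))) ∨
      ∃ r' ∈ HRRC.assignedTo M* (Hos12.x (v j l) (kIdx j l)),
        ListPref (prefHos12 m₂ occ (Hos12.x (v j l) (kIdx j l))) (Res12.c j l) r') :
    False := by
  have hkv := H.kIdx_eq j l hv
  by_cases hlit : lit v pol σ j l = true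
  · by_cases hk2 : (kIdx j l : ℕ) < 2
    · have hσ : σ (v j l) = true := by
        have hle := H.lit_eq (σ := σ) j l hv
        rw [if_pos hk2] at hle; rw [← hle]; exact hlit
      rcases hstr with hfeas | ⟨r', hr', hlp⟩
      · rcases fin3_cases01 hk2 with hk0 | hk0 <;> rw [hk0] at hfeas
        · exact not_moveFeas (by simp) (mem_e_b (t := 0) hσ)
            (Or.inl ⟨v j l, Or.inl rfl⟩) (by simp) (by simp) hfeas
        · exact not_moveFeas (by simp) (mem_e_b (t := 1) hσ)
            (Or.inl ⟨v j l, Or.inr rfl⟩) (by simp) (by simp) hfeas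
      · have := H.occu_x01 hk2 (mem_assignedTo.1 hr')
        rw [this.1] at hσ; cases hσ
    · have hk2' : kIdx j l = 2 := fin3_eq2 hk2
      have hσ : σ (v j l) = false := by
        have hle := H.lit_eq (σ := σ) j l hv
        rw [if_neg hk2] at hle; rw [hle] at hlit; simpa using hlit
      rw [hk2'] at hcap
      rcases hcap with hlt | ⟨r', hr', hlp⟩
      · have he0 : (Res12.e (v j l) 0) ∈ HRRC.assignedTo M* (Hos12.x (v j l) 2) :=
          mem_assignedTo.2 (mem_e_x hσ)
        have he1 : (Res12.e (v j l) 1) ∈ HRRC.assignedTo M* (Hos12.x (v j l) 2) :=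
          mem_assignedTo.2 (mem_e_x hσ)
        have h2c : 1 < (HRRC.assignedTo M* (Hos12.x (v j l) 2)).card :=
          Finset.one_lt_card.2 ⟨_, he0, _, he1, by simp⟩
        have hq : (ppnInstance232 m₂ v occ kIdx).q (Hos12.x (v j l) 2) = 2 := by
          simp [ppnInstance232]
        omega
      · rcases H.occu_x2 (mem_assignedTo.1 hr') with ⟨hσ', -⟩ | ⟨-, rfl | rfl⟩
        · rw [hσ'] at hσ; cases hσ
        · refine absurd hlp ?_
          simp only [prefHos12]
          norm_num
          exact notLP_head (by simp)
        · refine absurd hlp ?_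
          simp only [prefHos12]
          norm_num
          exact notLP_second (by simp) (by simp) (by simp)
  · exact hnm (mem_c_x hv (by simpa using hlit))

lemma noSBP (hsat : ∀ j : Fin m, ∃ l : Fin 3,
      (l : ℕ) < (if (j : ℕ) < m₂ then 2 else 3) ∧ lit v pol σ j l = true)
    (r : Res12 n m) (h : Hos12 n m) :
    ¬ (ppnInstance232 m₂ v occ kIdx).IsSBP M* r h := by
  rintro ⟨⟨hnm, ⟨haccR, haccH⟩, hbet, hcap⟩, hstr⟩
  rw [inst_prefR] at haccR hbet
  rw [inst_prefH] at haccH hcap hstr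
  cases r with
  | e i t =>
    have haccR' : h = Hos12.b i t ∨ h = Hos12.x i 2 := by
      fin_cases t <;> simpa [prefRes12] using haccR
    rcases haccR' with rfl | rfl
    · by_cases hσ : σ i = true
      · exact hnm (mem_e_b hσ)
      · have hσ' : σ i = false := by simpa using hσ
        rcases hstr with hfeas | ⟨r', hr', hlp⟩
        · fin_cases t
          · exact not_moveFeas (by simp) (H.mem_cocc_x hσ' (k := 0) (by norm_num))
              (Or.inl ⟨i, Or.inl rfl⟩) (by simp) (by simp) hfeas
          · exact not_moveFeas (by simp) (H.mem_cocc_x hσ' (k := 1) (by norm_num))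
              (Or.inl ⟨i, Or.inr rfl⟩) (by simp) (by simp) hfeas
        · have hb := occu_b (mem_assignedTo.1 hr')
          rw [hb.2] at hσ'; cases hσ'
    · by_cases hσ : σ i = true
      · refine hbet_contra (mem_e_b hσ) ?_ hbet
        fin_cases t <;>
          · simp only [prefRes12]
            norm_num
            exact notLP_head (by simp)
      · exact hnm (mem_e_x (by simpa using hσ))
  | c j l =>
    by_cases h3 : (l : ℕ) < 2
    · have hv : (l : ℕ) < (if (j : ℕ) < m₂ then 2 else 3) := by split <;> omega
      have haccR' : h = Hos12.x (v j l) (kIdx j l) ∨ h = Hos12.a j 0 := by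
        simpa [prefRes12, h3] using haccR
      rcases haccR' with rfl | rfl
      · exact H.c_x_refute hv hnm hcap hstr
      · by_cases hlit : lit v pol σ j l = true
        case neg =>
          refine hbet_contra (mem_c_x hv (by simpa using hlit)) ?_ hbet
          simp only [prefRes12, if_pos h3]
          exact notLP_head (by simp)
        by_cases hslot : (j : ℕ) < m₂ ∨ lit v pol σ j 2 = false
        · by_cases hsel : (l : ℕ) = 0 ∨ lit v pol σ j 0 = false
          · exact hnm (mem_c_a0' hv hlit h3 hslot hsel)
          · rw [not_or] at hsel
            obtain ⟨hl0, h00⟩ := hsel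
            have h00' : lit v pol σ j 0 = true := by
              cases hb : lit v pol σ j 0
              · exact absurd hb h00
              · rfl
            have hl1 : l = 1 := by rw [Fin.ext_iff]; simp; omega
            subst hl1
            refine absurd hcap (not_hcap1 (o := Res12.c j 0) ?_ ?_ rfl ?_)
            · have := mem_c_a0 (m₂ := m₂) (kIdx := kIdx) hslot (Or.inl h00')
              rwa [if_pos h00'] at this
            · intro r' hr'
              have := (occu_a0 hr').1
              rwa [if_pos h00'] at this
            · simp only [prefHos12]
              norm_num
              exact notLP_head (by simp)
        · rw [not_or] at hslot
          obtain ⟨hj, hl2⟩ := hslot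
          have hl2' : lit v pol σ j 2 = true := by
            cases hb : lit v pol σ j 2
            · exact absurd hb hl2
            · rfl
          rcases hstr with hfeas | ⟨r', hr', hlp⟩
          · exact not_moveFeas (by simp) (mem_d_a1 hj hl2') (region_a0a1 hj)
              (by simp) (by simp) hfeas
          · rcases (occu_a0 (mem_assignedTo.1 hr')).2.1 with hc | hc
            · exact hj hc
            · rw [hl2'] at hc; cases hc
    · have hl2 : l = 2 := fin3_eq2 h3
      subst hl2
      by_cases hj : (j : ℕ) < m₂
      · simp [prefRes12, hj] at haccR
      · have hv : ((2 : Fin 3) : ℕ) < (if (j : ℕ) < m₂ then 2 else 3) := by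
          rw [if_neg hj]; norm_num
        have haccR' : h = Hos12.x (v j 2) (kIdx j 2) ∨ h = Hos12.a j 2 := by
          simpa [prefRes12, hj] using haccR
        rcases haccR' with rfl | rfl
        · exact H.c_x_refute hv hnm hcap hstr
        · by_cases hlit : lit v pol σ j 2 = true
          · exact hnm (mem_c_a2 hj hlit)
          · refine hbet_contra (mem_c_x hv (by simpa using hlit)) ?_ hbet
            simp only [prefRes12, hj]
            norm_num
            exact notLP_head (by simp)
  | d j =>
    by_cases hj : (j : ℕ) < m₂
    · simp [prefRes12, hj] at haccR
    · have haccR' : h = Hos12.a j 1 ∨ h = Hos12.a j 2 := by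
        simpa [prefRes12, hj] using haccR
      rcases haccR' with rfl | rfl
      · by_cases hlit : lit v pol σ j 2 = true
        · exact hnm (mem_d_a1 hj hlit)
        · have hlit' : lit v pol σ j 2 = false := by simpa using hlit
          rcases hstr with hfeas | ⟨r', hr', hlp⟩
          · obtain ⟨l₀, hl₀v, hl₀⟩ := hsat j
            have hl₀2 : (l₀ : ℕ) < 2 := by
              by_contra hc
              rw [fin3_eq2 hc] at hl₀
              rw [hl₀] at hlit'; cases hlit'
            have hor : lit v pol σ j 0 = true ∨ lit v pol σ j 1 = true := by
              rcases fin3_cases01 hl₀2 with rfl | rfl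
              · exact Or.inl hl₀
              · exact Or.inr hl₀
            exact not_moveFeas (by simp) (mem_c_a0 (Or.inr hlit') hor)
              (region_a0a1 hj) (by simp) (by simp) hfeas
          · have := (occu_a1 (mem_assignedTo.1 hr')).2.2
            rw [this] at hlit'; cases hlit'
      · by_cases hlit : lit v pol σ j 2 = true
        · refine hbet_contra (mem_d_a1 hj hlit) ?_ hbet
          simp only [prefRes12, if_neg hj]
          exact notLP_head (by simp)
        · exact hnm (mem_d_a2 hj (by simpa using hlit))
  | g1 j =>
    have haccR' : h = Hos12.g2 j ∨ h = Hos12.g4 j := by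
      simpa [prefRes12] using haccR
    rcases haccR' with rfl | rfl
    · refine absurd hcap (not_hcap1 mem_z (fun r' hr' => occu_g2 hr') rfl ?_)
      simp only [prefHos12]
      exact notLP_head (by simp)
    · rcases hstr with hfeas | ⟨r', hr', hlp⟩
      · exact not_moveFeas (by simp) (mem_z (j := j)) (region_g (j := j))
          (by simp) (by simp) hfeas
      · exact occu_g4 (mem_assignedTo.1 hr')
  | g3 j =>
    have haccR' : h = Hos12.g4 j ∨ h = Hos12.g2 j := by
      simpa [prefRes12] using haccR
    rcases haccR' with rfl | rfl
    · rcases hstr with hfeas | ⟨r', hr', hlp⟩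
      · exact not_moveFeas (by simp) (mem_z (j := j)) (region_g (j := j))
          (by simp) (by simp) hfeas
      · exact occu_g4 (mem_assignedTo.1 hr')
    · refine absurd hcap (not_hcap1 mem_z (fun r' hr' => occu_g2 hr') rfl ?_)
      simp only [prefHos12]
      exact notLP_head (by simp)
  | z j =>
    have haccR' : h = Hos12.y j ∨ h = Hos12.g2 j := by
      simpa [prefRes12] using haccR
    rcases haccR' with rfl | rfl
    · rcases hstr with hfeas | ⟨r', hr', hlp⟩
      · by_cases hj : (j : ℕ) < m₂
        · obtain ⟨l₀, hl₀v, hl₀⟩ := hsat j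
          rw [if_pos hj] at hl₀v
          have hor : lit v pol σ j 0 = true ∨ lit v pol σ j 1 = true := by
            rcases fin3_cases01 hl₀v with rfl | rfl
            · exact Or.inl hl₀
            · exact Or.inr hl₀
          exact not_moveFeas (by simp) (mem_c_a0 (Or.inl hj) hor)
            (region_a0y hj) (by simp) (by simp) hfeas
        · by_cases hlit : lit v pol σ j 2 = true
          · exact not_moveFeas (by simp) (mem_c_a2 hj hlit) (region_a2y hj)
              (by simp) (by simp) hfeas
          · exact not_moveFeas (by simp) (mem_d_a2 hj (by simpa using hlit))
              (region_a2y hj) (by simp) (by simp) hfeas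
      · exact occu_y (mem_assignedTo.1 hr')
    · exact hnm mem_z


omit H in
lemma regmem_g2 {j : Fin m} {E : Finset (Hos12 n m)} (hE : E ∈ regions12 m₂)
    (hm : Hos12.g2 j ∈ E) : E = {Hos12.g2 j, Hos12.g4 j} := by
  rcases hE with ⟨i', hE | hE⟩ | ⟨j', ⟨hj', hE⟩ | ⟨hj', hE | hE⟩ | hE⟩ <;> subst hE <;>
    simp only [Finset.mem_insert, Finset.mem_singleton] at hm <;>
    rcases hm with hm | hm <;>
    first
      | (revert hm; simp; done)
      | (rw [Hos12.g2.injEq] at hm; subst hm; rfl)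

omit H in
lemma regmem_g4 {j : Fin m} {E : Finset (Hos12 n m)} (hE : E ∈ regions12 m₂)
    (hm : Hos12.g4 j ∈ E) : E = {Hos12.g2 j, Hos12.g4 j} := by
  rcases hE with ⟨i', hE | hE⟩ | ⟨j', ⟨hj', hE⟩ | ⟨hj', hE | hE⟩ | hE⟩ <;> subst hE <;>
    simp only [Finset.mem_insert, Finset.mem_singleton] at hm <;>
    rcases hm with hm | hm <;>
    first
      | (revert hm; simp; done)
      | (rw [Hos12.g4.injEq] at hm; subst hm; rfl)

omit H in
lemma regmem_x2 {i : Fin n} {E : Finset (Hos12 n m)} (hE : E ∈ regions12 m₂)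
    (hm : Hos12.x i 2 ∈ E) : False := by
  rcases hE with ⟨i', hE | hE⟩ | ⟨j', ⟨hj', hE⟩ | ⟨hj', hE | hE⟩ | hE⟩ <;> subst hE <;>
    simp only [Finset.mem_insert, Finset.mem_singleton] at hm <;>
    rcases hm with hm | hm <;>
    first
      | (revert hm; simp; done)
      | (rw [Hos12.x.injEq] at hm
         exact absurd hm.2 (by decide))

omit H in
lemma regmem_x01 {i : Fin n} {k : Fin 3} (hk : (k : ℕ) < 2) {E : Finset (Hos12 n m)}
    (hE : E ∈ regions12 m₂) (hm : Hos12.x i k ∈ E) :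
    (k = 0 ∧ E = {Hos12.b i 0, Hos12.x i 0}) ∨
      (k = 1 ∧ E = {Hos12.b i 1, Hos12.x i 1}) := by
  rcases hE with ⟨i', hE | hE⟩ | ⟨j', ⟨hj', hE⟩ | ⟨hj', hE | hE⟩ | hE⟩ <;> subst hE <;>
    simp only [Finset.mem_insert, Finset.mem_singleton] at hm <;>
    rcases hm with hm | hm <;>
    first
      | (revert hm; simp; done)
      | (rw [Hos12.x.injEq] at hm
         obtain ⟨rfl, rfl⟩ := hm
         first
           | exact Or.inl ⟨rfl, rfl⟩
           | exact Or.inr ⟨rfl, rfl⟩)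

omit H in
lemma regmem_a1 {j : Fin m} {E : Finset (Hos12 n m)} (hE : E ∈ regions12 m₂)
    (hm : Hos12.a j 1 ∈ E) : E = {Hos12.a j 0, Hos12.a j 1} := by
  rcases hE with ⟨i', hE | hE⟩ | ⟨j', ⟨hj', hE⟩ | ⟨hj', hE | hE⟩ | hE⟩ <;> subst hE <;>
    simp only [Finset.mem_insert, Finset.mem_singleton] at hm <;>
    rcases hm with hm | hm <;>
    first
      | (revert hm; simp; done)
      | (rw [Hos12.a.injEq] at hm
         exact absurd hm.2 (by decide))
      | (rw [Hos12.a.injEq] at hm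
         obtain ⟨rfl, -⟩ := hm
         rfl)

omit H in
lemma regmem_y {j : Fin m} {E : Finset (Hos12 n m)} (hE : E ∈ regions12 m₂)
    (hm : Hos12.y j ∈ E) :
    ((j : ℕ) < m₂ ∧ E = {Hos12.a j 0, Hos12.y j}) ∨
      (¬ (j : ℕ) < m₂ ∧ E = {Hos12.a j 2, Hos12.y j}) := by
  rcases hE with ⟨i', hE | hE⟩ | ⟨j', ⟨hj', hE⟩ | ⟨hj', hE | hE⟩ | hE⟩ <;> subst hE <;>
    simp only [Finset.mem_insert, Finset.mem_singleton] at hm <;>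
    rcases hm with hm | hm <;>
    first
      | (revert hm; simp; done)
      | (rw [Hos12.y.injEq] at hm
         subst hm
         first
           | exact Or.inl ⟨hj', rfl⟩
           | exact Or.inr ⟨hj', rfl⟩)


section Forward

variable {M : Finset (Res12 n m × Hos12 n m)}

omit H in
lemma capOne (hq : ∀ h, (HRRC.assignedTo M h).card ≤ (ppnInstance232 m₂ v occ kIdx).q h)
    {h : Hos12 n m} (hqh : (ppnInstance232 m₂ v occ kIdx).q h = 1)
    {r1 r2 : Res12 n m} (h1 : (r1, h) ∈ M) (h2 : (r2, h) ∈ M) : r1 = r2 := by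
  have hc := hq h
  rw [hqh] at hc
  exact Finset.card_le_one.1 hc _ (mem_assignedTo.2 h1) _ (mem_assignedTo.2 h2)

omit H in
lemma feas2 (hfeas : (ppnInstance232 m₂ v occ kIdx).FeasibleCaps M)
    {E : Finset (Hos12 n m)} (hE : E ∈ regions12 m₂)
    {r1 r2 : Res12 n m} {h1 h2 : Hos12 n m} (hm1 : (r1, h1) ∈ M) (hm2 : (r2, h2) ∈ M)
    (hh1 : h1 ∈ E) (hh2 : h2 ∈ E) : r1 = r2 := by
  have hc := hfeas E hE
  have hcap : (ppnInstance232 m₂ v occ kIdx).cap E = 1 := rfl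
  rw [hcap] at hc
  exact Finset.card_le_one.1 hc _ (mem_assignedIn.2 ⟨h1, hh1, hm1⟩)
    _ (mem_assignedIn.2 ⟨h2, hh2, hm2⟩)

omit H in
lemma z_at_g2 (hM : (ppnInstance232 m₂ v occ kIdx).IsStronglyStable M) (j : Fin m) :
    (Res12.z j, Hos12.g2 j) ∈ M := by
  obtain ⟨⟨hacc, huniq, hq⟩, hfeas, hns⟩ := hM
  by_contra hzg2
  have occG2 : ∀ r, (r, Hos12.g2 j) ∈ M →
      r = Res12.z j ∨ r = Res12.g3 j ∨ r = Res12.g1 j := by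
    intro r hr
    have := (hacc _ hr).2
    simpa [ppnInstance232, prefHos12] using this
  have occG4 : ∀ r, (r, Hos12.g4 j) ∈ M → r = Res12.g1 j ∨ r = Res12.g3 j := by
    intro r hr
    have := (hacc _ hr).2
    simpa [ppnInstance232, prefHos12] using this
  by_cases hg3g2 : (Res12.g3 j, Hos12.g2 j) ∈ M
  · -- (g3, g4) is a strong blocking pair
    have hg4e : ∀ r, (r, Hos12.g4 j) ∉ M := by
      intro r hr
      rcases occG4 r hr with rfl | rfl
      · exact absurd (feas2 hfeas (region_g (j := j)) hg3g2 hr (by simp) (by simp)) (by simp)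
      · exact absurd (huniq _ _ _ hg3g2 hr) (by simp)
    refine hns (Res12.g3 j) (Hos12.g4 j) ⟨⟨hg4e _, ⟨?_, ?_⟩, ?_, ?_⟩, ?_⟩
    · show Hos12.g4 j ∈ prefRes12 m₂ v kIdx (Res12.g3 j)
      simp [prefRes12]
    · show Res12.g3 j ∈ prefHos12 m₂ occ (Hos12.g4 j)
      simp [prefHos12]
    · refine Or.inr ⟨_, hg3g2, ?_⟩
      show ListPref (prefRes12 m₂ v kIdx (Res12.g3 j)) _ _
      simp only [prefRes12]
      exact LP_head (by simp)
    · refine Or.inl ?_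
      have hq1 : (ppnInstance232 m₂ v occ kIdx).q (Hos12.g4 j) = 1 := rfl
      rw [assignedTo_card_zero hg4e, hq1]
      norm_num
    · refine Or.inl (moveFeas hfeas (fun _ => le_refl 1) ?_)
      intro E hE hgE r' h' hm' hh'E
      rw [regmem_g4 hE hgE] at hh'E
      rcases Finset.mem_insert.1 hh'E with rfl | hh'
      · exact capOne hq (h := Hos12.g2 j) rfl hm' hg3g2
      · rw [Finset.mem_singleton] at hh'
        subst hh'
        exact absurd hm' (hg4e r')
  by_cases hg1g2 : (Res12.g1 j, Hos12.g2 j) ∈ M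
  · -- (g3, g2) is a strong blocking pair
    have hg3un : ∀ h', (Res12.g3 j, h') ∉ M := by
      intro h' hm'
      have := (hacc _ hm').1
      simp only [ppnInstance232, prefRes12, List.mem_cons, List.mem_singleton,
        List.not_mem_nil, or_false] at this
      rcases this with rfl | rfl
      · exact absurd (feas2 hfeas (region_g (j := j)) hg1g2 hm' (by simp) (by simp)) (by simp)
      · exact hg3g2 hm'
    have hlp : ListPref (prefHos12 m₂ occ (Hos12.g2 j)) (Res12.g3 j) (Res12.g1 j) := by
      simp only [prefHos12]
      exact LP_mid (by simp) (by simp) (by simp)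
    exact hns (Res12.g3 j) (Hos12.g2 j) ⟨⟨hg3un _,
      ⟨by show _ ∈ prefRes12 m₂ v kIdx (Res12.g3 j); simp [prefRes12],
        by show _ ∈ prefHos12 m₂ occ (Hos12.g2 j); simp [prefHos12]⟩,
      Or.inl hg3un, Or.inr ⟨_, mem_assignedTo.2 hg1g2, hlp⟩⟩,
      Or.inr ⟨_, mem_assignedTo.2 hg1g2, hlp⟩⟩
  have hg2e : ∀ r, (r, Hos12.g2 j) ∉ M := by
    intro r hr
    rcases occG2 r hr with rfl | rfl | rfl
    exacts [hzg2 hr, hg3g2 hr, hg1g2 hr]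
  by_cases hg1g4 : (Res12.g1 j, Hos12.g4 j) ∈ M
  · -- (g1, g2) is a strong blocking pair
    refine hns (Res12.g1 j) (Hos12.g2 j) ⟨⟨hg2e _, ⟨?_, ?_⟩, ?_, ?_⟩, ?_⟩
    · show Hos12.g2 j ∈ prefRes12 m₂ v kIdx (Res12.g1 j)
      simp [prefRes12]
    · show Res12.g1 j ∈ prefHos12 m₂ occ (Hos12.g2 j)
      simp [prefHos12]
    · refine Or.inr ⟨_, hg1g4, ?_⟩
      show ListPref (prefRes12 m₂ v kIdx (Res12.g1 j)) _ _
      simp only [prefRes12]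
      exact LP_head (by simp)
    · refine Or.inl ?_
      have hq1 : (ppnInstance232 m₂ v occ kIdx).q (Hos12.g2 j) = 1 := rfl
      rw [assignedTo_card_zero hg2e, hq1]
      norm_num
    · refine Or.inl (moveFeas hfeas (fun _ => le_refl 1) ?_)
      intro E hE hgE r' h' hm' hh'E
      rw [regmem_g2 hE hgE] at hh'E
      rcases Finset.mem_insert.1 hh'E with rfl | hh'
      · exact absurd hm' (hg2e r')
      · rw [Finset.mem_singleton] at hh'
        subst hh'
        exact capOne hq (h := Hos12.g4 j) rfl hm' hg1g4
  by_cases hg3g4 : (Res12.g3 j, Hos12.g4 j) ∈ M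
  · -- (g1, g4) is a strong blocking pair
    have hg1un : ∀ h', (Res12.g1 j, h') ∉ M := by
      intro h' hm'
      have := (hacc _ hm').1
      simp only [ppnInstance232, prefRes12, List.mem_cons, List.mem_singleton,
        List.not_mem_nil, or_false] at this
      rcases this with rfl | rfl
      · exact hg2e _ hm'
      · exact absurd (capOne hq (h := Hos12.g4 j) rfl hm' hg3g4) (by simp)
    have hlp : ListPref (prefHos12 m₂ occ (Hos12.g4 j)) (Res12.g1 j) (Res12.g3 j) := by
      simp only [prefHos12]
      exact LP_head (by simp)
    exact hns (Res12.g1 j) (Hos12.g4 j) ⟨⟨hg1un _,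
      ⟨by show _ ∈ prefRes12 m₂ v kIdx (Res12.g1 j); simp [prefRes12],
        by show _ ∈ prefHos12 m₂ occ (Hos12.g4 j); simp [prefHos12]⟩,
      Or.inl hg1un, Or.inr ⟨_, mem_assignedTo.2 hg3g4, hlp⟩⟩,
      Or.inr ⟨_, mem_assignedTo.2 hg3g4, hlp⟩⟩
  have hg4e : ∀ r, (r, Hos12.g4 j) ∉ M := by
    intro r hr
    rcases occG4 r hr with rfl | rfl
    exacts [hg1g4 hr, hg3g4 hr]
  have hg1un : ∀ h', (Res12.g1 j, h') ∉ M := by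
    intro h' hm'
    have := (hacc _ hm').1
    simp only [ppnInstance232, prefRes12, List.mem_cons, List.mem_singleton,
      List.not_mem_nil, or_false] at this
    rcases this with rfl | rfl
    · exact hg2e _ hm'
    · exact hg4e _ hm'
  refine hns (Res12.g1 j) (Hos12.g2 j) ⟨⟨hg2e _, ⟨?_, ?_⟩, Or.inl hg1un, ?_⟩, ?_⟩
  · show Hos12.g2 j ∈ prefRes12 m₂ v kIdx (Res12.g1 j)
    simp [prefRes12]
  · show Res12.g1 j ∈ prefHos12 m₂ occ (Hos12.g2 j)
    simp [prefHos12]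
  · refine Or.inl ?_
    have hq1 : (ppnInstance232 m₂ v occ kIdx).q (Hos12.g2 j) = 1 := rfl
    rw [assignedTo_card_zero hg2e, hq1]
    norm_num
  · refine Or.inl (moveFeas hfeas (fun _ => le_refl 1) ?_)
    intro E hE hgE r' h' hm' hh'E
    rw [regmem_g2 hE hgE] at hh'E
    rcases Finset.mem_insert.1 hh'E with rfl | hh'
    · exact absurd hm' (hg2e r')
    · rw [Finset.mem_singleton] at hh'
      subst hh'
      exact absurd hm' (hg4e r')

end Forward


section Forward2

variable {M : Finset (Res12 n m × Hos12 n m)}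

omit H in
lemma A_occupied (hM : (ppnInstance232 m₂ v occ kIdx).IsStronglyStable M) (j : Fin m) :
    ∃ r', (r', if (j : ℕ) < m₂ then Hos12.a j 0 else Hos12.a j 2) ∈ M ∧
      r' ≠ Res12.z j := by
  have hz := z_at_g2 hM j
  obtain ⟨⟨hacc, huniq, hq⟩, hfeas, hns⟩ := hM
  have hnm : (Res12.z j, Hos12.y j) ∉ M := fun hc =>
    absurd (huniq _ _ _ hz hc) (by simp)
  have hye : ∀ r, (r, Hos12.y j) ∉ M := by
    intro r hr
    have hp := (hacc _ hr).2
    simp only [ppnInstance232, prefHos12, List.mem_singleton] at hp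
    subst hp
    exact hnm hr
  have hblock : (ppnInstance232 m₂ v occ kIdx).IsBlockingPair M (Res12.z j) (Hos12.y j) := by
    refine ⟨hnm, ⟨?_, ?_⟩, ?_, ?_⟩
    · show Hos12.y j ∈ prefRes12 m₂ v kIdx (Res12.z j)
      simp [prefRes12]
    · show Res12.z j ∈ prefHos12 m₂ occ (Hos12.y j)
      simp [prefHos12]
    · refine Or.inr ⟨_, hz, ?_⟩
      show ListPref (prefRes12 m₂ v kIdx (Res12.z j)) _ _
      simp only [prefRes12]
      exact LP_head (by simp)
    · refine Or.inl ?_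
      have hq1 : (ppnInstance232 m₂ v occ kIdx).q (Hos12.y j) = 1 := rfl
      rw [assignedTo_card_zero hye, hq1]
      norm_num
  have hnotfeas : ¬ (ppnInstance232 m₂ v occ kIdx).FeasibleCaps
      (HRRC.move M (Res12.z j) (Hos12.y j)) := by
    intro hfeas'
    exact hns _ _ ⟨hblock, Or.inl hfeas'⟩
  obtain ⟨E, hE, hyE, r', h', hm', hh'E, hne⟩ := moveInfeas hfeas (fun _ => rfl) hnotfeas
  rcases regmem_y hE hyE with ⟨hj, rfl⟩ | ⟨hj, rfl⟩ <;>
    rcases Finset.mem_insert.1 hh'E with rfl | hh'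
  · rw [if_pos hj]
    exact ⟨r', hm', hne⟩
  · rw [Finset.mem_singleton] at hh'
    subst hh'
    exact absurd hm' (hye r')
  · rw [if_neg hj]
    exact ⟨r', hm', hne⟩
  · rw [Finset.mem_singleton] at hh'
    subst hh'
    exact absurd hm' (hye r')

lemma lit_true_of_c (hM : (ppnInstance232 m₂ v occ kIdx).IsStronglyStable M)
    {j : Fin m} {l : Fin 3} (hv : (l : ℕ) < (if (j : ℕ) < m₂ then 2 else 3))
    (hca : (Res12.c j l, Hos12.a j (if (l : ℕ) < 2 then 0 else 2)) ∈ M) :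
    lit v pol (extAsg M) j l = true := by
  have hkv := H.kIdx_eq j l hv
  have hpol : pol j l = decide ((kIdx j l : ℕ) < 2) := by
    have h' := H.occPol (v j l) (kIdx j l)
    rw [hkv] at h'
    exact h'
  obtain ⟨⟨hacc, huniq, hq⟩, hfeas, hns⟩ := hM
  have hxne : (Res12.c j l, Hos12.x (v j l) (kIdx j l)) ∉ M := by
    intro hc
    exact absurd (huniq _ _ _ hca hc) (by simp)
  have hj2 : ¬ (l : ℕ) < 2 → ¬ (j : ℕ) < m₂ := by
    intro h3 hc
    rw [if_pos hc] at hv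
    omega
  have haccx1 : Hos12.x (v j l) (kIdx j l) ∈
      (ppnInstance232 m₂ v occ kIdx).prefR (Res12.c j l) := by
    show _ ∈ prefRes12 m₂ v kIdx (Res12.c j l)
    by_cases h3 : (l : ℕ) < 2
    · simp [prefRes12, h3]
    · simp [prefRes12, h3, hj2 h3]
  have haccx2 : Res12.c j l ∈ prefHos12 m₂ occ (Hos12.x (v j l) (kIdx j l)) := by
    by_cases hk2 : (kIdx j l : ℕ) < 2 <;> simp [prefHos12, hk2, hkv]
  have hpref : ListPref ((ppnInstance232 m₂ v occ kIdx).prefR (Res12.c j l))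
      (Hos12.x (v j l) (kIdx j l)) (Hos12.a j (if (l : ℕ) < 2 then 0 else 2)) := by
    show ListPref (prefRes12 m₂ v kIdx (Res12.c j l)) _ _
    by_cases h3 : (l : ℕ) < 2
    · simp only [prefRes12, if_pos h3]
      exact LP_head (by simp)
    · simp only [prefRes12, if_neg h3, if_neg (hj2 h3)]
      exact LP_head (by simp)
  by_cases hk2 : (kIdx j l : ℕ) < 2
  · -- positive occurrence: the corresponding `e` must be at its `b`
    have key : ∀ t : Fin 2, kIdx j l = Fin.castLE (by norm_num) t →
        (Res12.e (v j l) t, Hos12.b (v j l) t) ∈ M := by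
      intro t ht
      by_contra heb
      have hxe : ∀ r, (r, Hos12.x (v j l) (kIdx j l)) ∉ M := by
        intro r hr
        have hp := (hacc _ hr).2
        simp only [ppnInstance232, prefHos12, if_pos hk2, hkv, List.mem_singleton] at hp
        subst hp
        exact hxne hr
      refine hns (Res12.c j l) (Hos12.x (v j l) (kIdx j l))
        ⟨⟨hxne, ⟨haccx1, haccx2⟩, Or.inr ⟨_, hca, hpref⟩, Or.inl ?_⟩,
          Or.inl (moveFeas hfeas (fun _ => le_refl 1) ?_)⟩
      · have hq1 : (ppnInstance232 m₂ v occ kIdx).q (Hos12.x (v j l) (kIdx j l)) = 1 := by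
          have : (kIdx j l : ℕ) ≠ 2 := by omega
          simp [ppnInstance232, this]
        rw [assignedTo_card_zero hxe, hq1]
        norm_num
      · intro E hE hxE r' h' hm' hh'E
        rcases regmem_x01 hk2 hE hxE with ⟨hkk, rfl⟩ | ⟨hkk, rfl⟩ <;>
          rcases Finset.mem_insert.1 hh'E with rfl | hh'
        · have hp := (hacc _ hm').2
          simp only [ppnInstance232, prefHos12, List.mem_singleton] at hp
          norm_num at hp
          subst hp
          exfalso
          apply heb
          have ht0 : t = 0 := by
            rw [hkk] at ht
            fin_cases t
            · rfl
            · exact absurd ht.symm (by decide)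
          rw [ht0]
          exact hm'
        · rw [Finset.mem_singleton] at hh'
          subst hh'
          rw [hkk] at hxe
          exact absurd hm' (hxe r')
        · have hp := (hacc _ hm').2
          simp only [ppnInstance232, prefHos12, List.mem_singleton] at hp
          norm_num at hp
          subst hp
          exfalso
          apply heb
          have ht0 : t = 1 := by
            rw [hkk] at ht
            fin_cases t
            · exact absurd ht.symm (by decide)
            · rfl
          rw [ht0]
          exact hm'
        · rw [Finset.mem_singleton] at hh'
          subst hh'
          rw [hkk] at hxe
          exact absurd hm' (hxe r')
    have hext : extAsg M (v j l) = true := by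
      rcases fin3_cases01 hk2 with hk0 | hk0
      · have := key 0 (by rw [hk0]; rfl)
        simp [extAsg]
        exact Or.inl this
      · have := key 1 (by rw [hk0]; rfl)
        simp [extAsg]
        exact Or.inr this
    unfold lit
    rw [hpol]
    simp only [hk2, decide_true]
    simpa using hext
  · -- negative occurrence: `x3` must be full with the two `e`s
    have hk2' : kIdx j l = 2 := fin3_eq2 hk2
    have hfull : ¬ (HRRC.assignedTo M (Hos12.x (v j l) (kIdx j l))).card < 2 := by
      intro hlt
      refine hns (Res12.c j l) (Hos12.x (v j l) (kIdx j l))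
        ⟨⟨hxne, ⟨haccx1, haccx2⟩, Or.inr ⟨_, hca, hpref⟩, Or.inl ?_⟩,
          Or.inl (moveFeas hfeas (fun _ => le_refl 1) ?_)⟩
      · have hq2 : (ppnInstance232 m₂ v occ kIdx).q (Hos12.x (v j l) (kIdx j l)) = 2 := by
          simp [ppnInstance232, hk2']
        rw [hq2]
        exact hlt
      · intro E hE hxE
        rw [hk2'] at hxE
        exact absurd hxE (fun hc => regmem_x2 hE hc)
    have hsub : HRRC.assignedTo M (Hos12.x (v j l) (kIdx j l)) ⊆
        {Res12.e (v j l) 0, Res12.e (v j l) 1} := by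
      refine assignedTo_subset fun r hr => ?_
      have hp := (hacc _ hr).2
      simp only [ppnInstance232, prefHos12, if_neg hk2, hkv, List.mem_cons,
        List.mem_singleton, List.not_mem_nil, or_false] at hp
      rcases hp with rfl | rfl | rfl
      · simp
      · simp
      · exact absurd hr hxne
    have hEq := Finset.eq_of_subset_of_card_le hsub (by
      refine le_trans (Finset.card_insert_le _ _) ?_
      simp only [Finset.card_singleton]
      omega)
    have he0 : (Res12.e (v j l) 0, Hos12.x (v j l) (kIdx j l)) ∈ M := by
      refine mem_assignedTo.1 ?_
      rw [hEq]
      simp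
    have he1 : (Res12.e (v j l) 1, Hos12.x (v j l) (kIdx j l)) ∈ M := by
      refine mem_assignedTo.1 ?_
      rw [hEq]
      simp
    have hb0 : (Res12.e (v j l) 0, Hos12.b (v j l) 0) ∉ M := by
      intro hc
      have := huniq _ _ _ he0 hc
      rw [hk2'] at this
      exact absurd this (by simp)
    have hb1 : (Res12.e (v j l) 1, Hos12.b (v j l) 1) ∉ M := by
      intro hc
      have := huniq _ _ _ he1 hc
      rw [hk2'] at this
      exact absurd this (by simp)
    have hext : extAsg M (v j l) = false := by
      simp [extAsg, hb0, hb1]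
    unfold lit
    rw [hpol]
    simp only [hk2, decide_false]
    simp [hext]

omit H in
lemma d_redirect (hM : (ppnInstance232 m₂ v occ kIdx).IsStronglyStable M)
    {j : Fin m} (hj : ¬ (j : ℕ) < m₂) (hda2 : (Res12.d j, Hos12.a j 2) ∈ M) :
    ∃ r', (r', Hos12.a j 0) ∈ M := by
  obtain ⟨⟨hacc, huniq, hq⟩, hfeas, hns⟩ := hM
  have hnm : (Res12.d j, Hos12.a j 1) ∉ M := by
    intro hc
    have := huniq _ _ _ hda2 hc
    rw [Hos12.a.injEq] at this
    exact absurd this.2 (by decide)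
  have ha1e : ∀ r, (r, Hos12.a j 1) ∉ M := by
    intro r hr
    have hp := (hacc _ hr).2
    simp only [ppnInstance232, prefHos12, if_neg hj, List.mem_singleton] at hp
    norm_num at hp
    subst hp
    exact hnm hr
  have hblock : (ppnInstance232 m₂ v occ kIdx).IsBlockingPair M (Res12.d j)
      (Hos12.a j 1) := by
    refine ⟨hnm, ⟨?_, ?_⟩, ?_, ?_⟩
    · show Hos12.a j 1 ∈ prefRes12 m₂ v kIdx (Res12.d j)
      simp [prefRes12, hj]
    · show Res12.d j ∈ prefHos12 m₂ occ (Hos12.a j 1)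
      simp [prefHos12, hj]
    · refine Or.inr ⟨_, hda2, ?_⟩
      show ListPref (prefRes12 m₂ v kIdx (Res12.d j)) _ _
      simp only [prefRes12, if_neg hj]
      exact LP_head (by simp)
    · refine Or.inl ?_
      have hq1 : (ppnInstance232 m₂ v occ kIdx).q (Hos12.a j 1) = 1 := rfl
      rw [assignedTo_card_zero ha1e, hq1]
      norm_num
  have hnotfeas : ¬ (ppnInstance232 m₂ v occ kIdx).FeasibleCaps
      (HRRC.move M (Res12.d j) (Hos12.a j 1)) := by
    intro hfeas'
    exact hns _ _ ⟨hblock, Or.inl hfeas'⟩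
  obtain ⟨E, hE, hyE, r', h', hm', hh'E, hne⟩ := moveInfeas hfeas (fun _ => rfl) hnotfeas
  rw [regmem_a1 hE hyE] at hh'E
  rcases Finset.mem_insert.1 hh'E with rfl | hh'
  · exact ⟨r', hm'⟩
  · rw [Finset.mem_singleton] at hh'
    subst hh'
    exact absurd hm' (ha1e r')

lemma forward (hM : (ppnInstance232 m₂ v occ kIdx).IsStronglyStable M) (j : Fin m) :
    ∃ l : Fin 3, (l : ℕ) < (if (j : ℕ) < m₂ then 2 else 3) ∧
      lit v pol (extAsg M) j l = true := by
  have fromA0 : ∀ r'', (r'', Hos12.a j 0) ∈ M → ∃ l : Fin 3,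
      (l : ℕ) < (if (j : ℕ) < m₂ then 2 else 3) ∧
      lit v pol (extAsg M) j l = true := by
    intro r'' hr''
    have hp := (hM.1.1 _ hr'').2
    simp only [ppnInstance232, prefHos12, if_pos rfl, List.mem_cons, List.mem_singleton,
      List.not_mem_nil, or_false] at hp
    norm_num at hp
    rcases hp with rfl | rfl
    · have hv : ((0 : Fin 3) : ℕ) < (if (j : ℕ) < m₂ then 2 else 3) := by
        split <;> norm_num
      exact ⟨0, hv, H.lit_true_of_c hM hv (by simpa using hr'')⟩
    · have hv : ((1 : Fin 3) : ℕ) < (if (j : ℕ) < m₂ then 2 else 3) := by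
        split <;> norm_num
      exact ⟨1, hv, H.lit_true_of_c hM hv (by simpa using hr'')⟩
  obtain ⟨r', hr', hrz⟩ := A_occupied hM j
  by_cases hj : (j : ℕ) < m₂
  · rw [if_pos hj] at hr'
    exact fromA0 r' hr'
  · rw [if_neg hj] at hr'
    have hp := (hM.1.1 _ hr').2
    simp only [ppnInstance232, prefHos12, if_neg hj, List.mem_cons, List.mem_singleton,
      List.not_mem_nil, or_false] at hp
    norm_num at hp
    rcases hp with rfl | rfl
    · obtain ⟨r'', hr''⟩ := d_redirect hM hj hr'
      exact fromA0 r'' hr''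
    · have hv : ((2 : Fin 3) : ℕ) < (if (j : ℕ) < m₂ then 2 else 3) := by
        rw [if_neg hj]
        norm_num
      exact ⟨2, hv, H.lit_true_of_c hM hv (by simpa using hr')⟩

end Forward2

end Hyps

end PPN


/-- `I'` admits a strongly stable matching iff the PPN-3-SAT instance `I` is
satisfiable. -/
theorem ppn232_reduction_correct {n m m₂ : ℕ} (hm₂ : m₂ ≤ m)
    (v : Fin m → Fin 3 → Fin n) (pol : Fin m → Fin 3 → Bool)
    (occ : Fin n → Fin 3 → Fin m × Fin 3) (kIdx : Fin m → Fin 3 → Fin 3)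
    (hoccValid : ∀ i k, ((occ i k).2 : ℕ) < (if ((occ i k).1 : ℕ) < m₂ then 2 else 3))
    (hoccVar : ∀ i k, v (occ i k).1 (occ i k).2 = i)
    (hoccPol : ∀ i k, pol (occ i k).1 (occ i k).2 = decide ((k : ℕ) < 2))
    (hoccInj : ∀ i, Function.Injective (occ i))
    (hkIdx : ∀ (j : Fin m) (l : Fin 3), (l : ℕ) < (if (j : ℕ) < m₂ then 2 else 3) →
      occ (v j l) (kIdx j l) = (j, l)) :
    (∃ M : Finset (Res12 n m × Hos12 n m),
        (ppnInstance232 m₂ v occ kIdx).IsStronglyStable M) ↔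
    (∃ a : Fin n → Bool, ∀ j : Fin m, ∃ l : Fin 3,
        (l : ℕ) < (if (j : ℕ) < m₂ then 2 else 3) ∧
        (if pol j l then a (v j l) else !(a (v j l))) = true) := by
  have H : PPN.Hyps m₂ v pol occ kIdx := ⟨hoccValid, hoccVar, hoccPol, hoccInj, hkIdx⟩
  constructor
  · rintro ⟨M, hM⟩
    refine ⟨PPN.extAsg M, fun j => ?_⟩
    obtain ⟨l, hl1, hl2⟩ := H.forward hM j
    exact ⟨l, hl1, by simpa [PPN.lit] using hl2⟩
  · rintro ⟨a, ha⟩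
    refine ⟨PPN.bigM m₂ v pol kIdx a, H.isMatching, H.feasCaps, H.noSBP fun j => ?_⟩
    obtain ⟨l, hl1, hl2⟩ := ha j
    exact ⟨l, hl1, by simpa [PPN.lit] using hl2⟩
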